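/- arXiv:2412.10655 — 10 statements merged into one kernel-verified Lean document; each statement's English description precedes it below -/
import Mathlib

section
/- There exist a constant c > 0 and a threshold n₀ such that for every integer n ≥ n₀ and every finite field F with |F| ≥ 2n the following holds. Let t = ⌈10·log₂ n⌉ and let M be the random n×n matrix over F whose i-th row is ∑_{j=1}^{t} v_{i,j}·e_{p_{i,j}}, where all positions p_{i,j} ∈ {1,…,n} and all values v_{i,j} ∈ F are sampled independently and uniformly at random (here e_k is the k-th standard basis row vector, and if the same position is sampled several times in a row, the corresponding values are summed). Then with probability at least c, the matrix M is nonsingular, i.e., its n rows are linearly independent over F. -/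
open Finset Matrix

set_option linter.unusedSectionVars false
set_option maxHeartbeats 1000000

noncomputable section AuxRandomSparse

variable {F : Type} [Field F] [Fintype F] [DecidableEq F] {n t : ℕ}

def matp (P : Fin n → Fin t → Fin n) (σ : Equiv.Perm (Fin n)) (V : Fin n → Fin t → F) :
    Matrix (Fin n) (Fin n) F :=
  Matrix.of fun i k => ∑ j, if P i j = σ k then V i j else 0

noncomputable def Dm (P : Fin n → Fin t → Fin n) (σ : Equiv.Perm (Fin n))
    (V : Fin n → Fin t → F) (i : ℕ) : F :=
  if h : i ≤ n then ((matp P σ V).submatrix (Fin.castLE h) (Fin.castLE h)).det else 1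

lemma Dm_update_lt {i : ℕ} (P : Fin n → Fin t → Fin n) (σ : Equiv.Perm (Fin n))
    (hn' : i < n) (j₀ : Fin t) (V : Fin n → Fin t → F) (x : F) :
    Dm P σ (Function.update V ⟨i, hn'⟩ (Function.update (V ⟨i, hn'⟩) j₀ x)) i = Dm P σ V i := by
  have h0 : i ≤ n := le_of_lt hn'
  rw [Dm, Dm, dif_pos h0, dif_pos h0]
  congr 1
  ext r k
  simp only [Matrix.submatrix_apply, matp, Matrix.of_apply]
  have hne : (Fin.castLE h0 r) ≠ (⟨i, hn'⟩ : Fin n) := by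
    intro h
    have : (r : ℕ) = i := congrArg Fin.val h
    exact absurd this (Nat.ne_of_lt r.2)
  rw [Function.update_of_ne hne]

lemma Dm_update {i : ℕ} (P : Fin n → Fin t → Fin n) (σ : Equiv.Perm (Fin n))
    (hn' : i < n) (j₀ : Fin t) (hj₀ : P ⟨i, hn'⟩ j₀ = σ ⟨i, hn'⟩)
    (V : Fin n → Fin t → F) (x : F) :
    Dm P σ (Function.update V ⟨i, hn'⟩ (Function.update (V ⟨i, hn'⟩) j₀ x)) (i + 1)
      = Dm P σ V (i + 1) + (x - V ⟨i, hn'⟩ j₀) * Dm P σ V i := by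
  have h1 : i + 1 ≤ n := hn'
  have h0 : i ≤ n := le_of_lt hn'
  set iF : Fin n := ⟨i, hn'⟩ with hiF
  set V' := Function.update V iF (Function.update (V iF) j₀ x) with hV'
  set A : Matrix (Fin (i+1)) (Fin (i+1)) F :=
    (matp P σ V).submatrix (Fin.castLE h1) (Fin.castLE h1) with hA
  set A' : Matrix (Fin (i+1)) (Fin (i+1)) F :=
    (matp P σ V').submatrix (Fin.castLE h1) (Fin.castLE h1) with hA'
  have hcast_last : Fin.castLE h1 (Fin.last i) = iF := rfl
  -- Step 1 : A' is A with last row updated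
  have step1 : A' = Matrix.updateRow A (Fin.last i)
      (fun k => A (Fin.last i) k
        + (x - V iF j₀) * (if k = Fin.last i then 1 else 0)) := by
    ext r k
    by_cases hr : r = Fin.last i
    · subst hr
      rw [Matrix.updateRow_self]
      have hck : (P iF j₀ = σ (Fin.castLE h1 k)) ↔ k = Fin.last i := by
        rw [hj₀]
        constructor
        · intro h
          have := σ.injective h
          have hv : (k : ℕ) = i := (congrArg Fin.val this).symm
          exact Fin.ext hv
        · intro h; subst h; rfl
      simp only [hA', hA, Matrix.submatrix_apply, matp, Matrix.of_apply, hcast_last]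
      have hupd : V' iF = Function.update (V iF) j₀ x := Function.update_self _ _ _
      rw [hupd]
      rw [Finset.sum_eq_add_sum_sdiff_singleton_of_mem (Finset.mem_univ j₀),
          Finset.sum_eq_add_sum_sdiff_singleton_of_mem (Finset.mem_univ j₀)
            (fun j => if P iF j = σ (Fin.castLE h1 k) then V iF j else 0)]
      have hrest : ∀ j ∈ Finset.univ \ {j₀},
          (if P iF j = σ (Fin.castLE h1 k) then Function.update (V iF) j₀ x j else 0)
            = (if P iF j = σ (Fin.castLE h1 k) then V iF j else 0) := by
        intro j hj
        rw [Finset.mem_sdiff, Finset.mem_singleton] at hj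
        rw [Function.update_of_ne hj.2]
      rw [Finset.sum_congr rfl hrest]
      rw [Function.update_self]
      by_cases hk : k = Fin.last i
      · rw [if_pos (hck.mpr hk), if_pos (hck.mpr hk), if_pos hk]
        ring
      · rw [if_neg (fun h => hk (hck.mp h)), if_neg (fun h => hk (hck.mp h)), if_neg hk]
        ring
    · rw [Matrix.updateRow_ne hr]
      have hne : (Fin.castLE h1 r) ≠ iF := by
        intro h
        have hv : (r : ℕ) = i := congrArg Fin.val h
        exact hr (Fin.ext hv)
      simp only [hA', hA, Matrix.submatrix_apply, matp, Matrix.of_apply]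
      rw [hV', Function.update_of_ne hne]
  -- Step 3 : det with unit last row is the smaller minor
  have step3 : (Matrix.updateRow A (Fin.last i) (Pi.single (Fin.last i) 1)).det
      = Dm P σ V i := by
    rw [Matrix.det_succ_row _ (Fin.last i)]
    rw [Finset.sum_eq_single (Fin.last i)]
    · rw [Matrix.updateRow_self, Pi.single_eq_same]
      have hsub : (Matrix.updateRow A (Fin.last i) (Pi.single (Fin.last i) 1)).submatrix
            (Fin.last i).succAbove (Fin.last i).succAbove
          = (matp P σ V).submatrix (Fin.castLE h0) (Fin.castLE h0) := by
        ext r k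
        rw [Fin.succAbove_last]
        simp only [Matrix.submatrix_apply]
        have hne2 : r.castSucc ≠ Fin.last i := by
          intro h
          exact Nat.ne_of_lt r.2 (congrArg Fin.val h)
        rw [Matrix.updateRow_ne hne2]
        rfl
      rw [hsub, Dm, dif_pos h0]
      have : ((-1 : F)) ^ ((Fin.last i : ℕ) + (Fin.last i : ℕ)) = 1 :=
        Even.neg_one_pow (Even.add_self _)
      rw [this]; ring
    · intro b _ hb
      rw [Matrix.updateRow_self, Pi.single_eq_of_ne hb]
      ring
    · intro h; exact absurd (Finset.mem_univ _) h
  -- Assemble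
  rw [Dm, Dm, dif_pos h1, dif_pos h1, ← hA]
  have hA'eq : (matp P σ V').submatrix (Fin.castLE h1) (Fin.castLE h1) = A' := rfl
  rw [hA'eq, step1]
  have hrow : (fun k => A (Fin.last i) k + (x - V iF j₀) * (if k = Fin.last i then 1 else 0))
      = A (Fin.last i) + (x - V iF j₀) • (Pi.single (Fin.last i) (1:F) : Fin (i+1) → F) := by
    funext k
    simp [Pi.single_apply]
  rw [hrow, Matrix.det_updateRow_add, Matrix.det_updateRow_smul,
      Matrix.updateRow_eq_self, step3]


lemma card_val_pow : Fintype.card (Fin n → Fin t → F) = Fintype.card F ^ (n * t) := by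
  simp only [Fintype.card_fun, Fintype.card_fin]
  rw [mul_comm, pow_mul]

lemma values_step_count (P : Fin n → Fin t → Fin n) (σ : Equiv.Perm (Fin n)) {i : ℕ}
    (hn' : i < n) (hj : ∃ j, P ⟨i, hn'⟩ j = σ ⟨i, hn'⟩) :
    Fintype.card F * (univ.filter fun V : Fin n → Fin t → F =>
        Dm P σ V i ≠ 0 ∧ Dm P σ V (i + 1) = 0).card ≤ Fintype.card F ^ (n * t) := by
  classical
  obtain ⟨j₀, hj₀⟩ := hj
  set iF : Fin n := ⟨i, hn'⟩
  set bad := univ.filter fun V : Fin n → Fin t → F =>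
      Dm P σ V i ≠ 0 ∧ Dm P σ V (i + 1) = 0 with hbad
  have key : ((univ : Finset F) ×ˢ bad).card ≤ (univ : Finset (Fin n → Fin t → F)).card := by
    apply Finset.card_le_card_of_injOn
      (fun cV => Function.update cV.2 iF (Function.update (cV.2 iF) j₀ (cV.2 iF j₀ + cV.1)))
    · intro _ _; exact mem_univ _
    · rintro ⟨c, V⟩ hm ⟨c', V'⟩ hm' heq
      simp only [Finset.mem_coe, Finset.mem_product, hbad, Finset.mem_filter] at hm hm'
      have hVi := hm.2.2.1
      have hVi1 := hm.2.2.2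
      have hV'i1 := hm'.2.2.2
      simp only at heq
      -- rows other than iF agree
      have hrow : ∀ r, r ≠ iF → V r = V' r := by
        intro r hr
        have := congrFun heq r
        rwa [Function.update_of_ne hr, Function.update_of_ne hr] at this
      have hiFeq := congrFun heq iF
      rw [Function.update_self, Function.update_self] at hiFeq
      have hjj : ∀ j, j ≠ j₀ → V iF j = V' iF j := by
        intro j hjne
        have := congrFun hiFeq j
        rwa [Function.update_of_ne hjne, Function.update_of_ne hjne] at this
      have hsum : V iF j₀ + c = V' iF j₀ + c' := by
        have := congrFun hiFeq j₀
        rwa [Function.update_self, Function.update_self] at this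
      -- express V' as an update of V
      have hV'rep : V' = Function.update V iF (Function.update (V iF) j₀ (V' iF j₀)) := by
        funext r
        by_cases hr : r = iF
        · subst hr
          rw [Function.update_self]
          funext j
          by_cases hj : j = j₀
          · subst hj; rw [Function.update_self]
          · rw [Function.update_of_ne hj]; exact (hjj j hj).symm
        · rw [Function.update_of_ne hr]; exact (hrow r hr).symm
      have hd := Dm_update P σ hn' j₀ hj₀ V (V' iF j₀)
      rw [← hV'rep, hV'i1, hVi1, zero_add] at hd
      have hx : V' iF j₀ = V iF j₀ := by
        rcases mul_eq_zero.mp hd.symm with h | h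
        · exact sub_eq_zero.mp h
        · exact absurd h hVi
      have hVeq : V = V' := by
        rw [hV'rep, hx, Function.update_eq_self, Function.update_eq_self]
      have hceq : c = c' := by
        rw [hVeq] at hsum; rw [hx] at hsum; exact add_left_cancel hsum
      exact Prod.ext (by simp [hceq]) (by simp [hVeq])
  rwa [Finset.card_product, Finset.card_univ, Finset.card_univ, card_val_pow] at key

lemma exists_step {f : ℕ → Prop} : ∀ m : ℕ, f 0 → ¬ f m → ∃ i < m, f i ∧ ¬ f (i + 1) := by
  intro m
  induction m with
  | zero => intro h0 hm; exact absurd h0 hm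
  | succ k ih =>
    intro h0 hm
    by_cases hk : f k
    · exact ⟨k, Nat.lt_succ_self k, hk, hm⟩
    · obtain ⟨i, hi, hfi, hfi1⟩ := ih h0 hk
      exact ⟨i, Nat.lt_succ_of_lt hi, hfi, hfi1⟩

def mat (P : Fin n → Fin t → Fin n) (V : Fin n → Fin t → F) : Matrix (Fin n) (Fin n) F :=
  Matrix.of fun i k => ∑ j, if P i j = k then V i j else 0

lemma matp_det_ne (P : Fin n → Fin t → Fin n) (σ : Equiv.Perm (Fin n)) (V : Fin n → Fin t → F) :
    (matp P σ V).det ≠ 0 ↔ (mat P V).det ≠ 0 := by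
  have h : matp P σ V = (mat P V).submatrix id σ := rfl
  rw [h, det_permute']
  have hs : ((Equiv.Perm.sign σ : ℤ) : F) ≠ 0 := by
    rcases Int.units_eq_one_or (Equiv.Perm.sign σ) with h | h <;> simp [h]
  constructor
  · intro h h0; exact h (by simp [h0])
  · intro h h0
    rcases mul_eq_zero.mp h0 with h1 | h1
    · exact hs h1
    · exact h h1

lemma Dm_n (P : Fin n → Fin t → Fin n) (σ : Equiv.Perm (Fin n)) (V : Fin n → Fin t → F) :
    Dm P σ V n = (matp P σ V).det := by
  rw [Dm, dif_pos le_rfl]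
  congr 1

lemma Dm_zero (P : Fin n → Fin t → Fin n) (σ : Equiv.Perm (Fin n)) (V : Fin n → Fin t → F) :
    Dm P σ V 0 = 1 := by
  rw [Dm, dif_pos (Nat.zero_le n)]
  exact Matrix.det_fin_zero

lemma values_count (hn : 1 ≤ n) (hq : 2 * n ≤ Fintype.card F)
    (P : Fin n → Fin t → Fin n) (σ : Equiv.Perm (Fin n))
    (hσ : ∀ i : Fin n, ∃ j, P i j = σ i) :
    Fintype.card F ^ (n * t)
      ≤ 2 * (univ.filter fun V : Fin n → Fin t → F => (mat P V).det ≠ 0).card := by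
  classical
  set q := Fintype.card F with hqdef
  have hq0 : 0 < q := by omega
  set Z := univ.filter fun V : Fin n → Fin t → F => ¬ ((mat P V).det ≠ 0) with hZ
  set G := univ.filter fun V : Fin n → Fin t → F => (mat P V).det ≠ 0 with hG
  have hsub : Z ⊆ (Finset.range n).biUnion (fun i =>
      univ.filter fun V : Fin n → Fin t → F => Dm P σ V i ≠ 0 ∧ Dm P σ V (i + 1) = 0) := by
    intro V hV
    rw [hZ, mem_filter] at hV
    have hdet : (matp P σ V).det = 0 := by
      by_contra hne
      exact hV.2 ((matp_det_ne P σ V).mp hne)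
    have hDn : ¬ (Dm P σ V n ≠ 0) := by rw [Dm_n]; exact fun h => h hdet
    have hD0 : Dm P σ V 0 ≠ 0 := by rw [Dm_zero]; exact one_ne_zero
    obtain ⟨i, hi, hfi, hfi1⟩ := exists_step (f := fun i => Dm P σ V i ≠ 0) n hD0 hDn
    rw [Finset.mem_biUnion]
    exact ⟨i, Finset.mem_range.mpr hi, Finset.mem_filter.mpr ⟨mem_univ _, hfi, not_not.mp hfi1⟩⟩
  have hZcard : q * Z.card ≤ n * q ^ (n * t) := by
    calc q * Z.card ≤ q * ∑ i ∈ Finset.range n, (univ.filter fun V : Fin n → Fin t → F =>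
            Dm P σ V i ≠ 0 ∧ Dm P σ V (i + 1) = 0).card := by
          apply Nat.mul_le_mul_left
          exact le_trans (Finset.card_le_card hsub) (Finset.card_biUnion_le)
      _ = ∑ i ∈ Finset.range n, q * (univ.filter fun V : Fin n → Fin t → F =>
            Dm P σ V i ≠ 0 ∧ Dm P σ V (i + 1) = 0).card := Finset.mul_sum _ _ _
      _ ≤ ∑ i ∈ Finset.range n, q ^ (n * t) := by
          apply Finset.sum_le_sum
          intro i hi
          exact values_step_count P σ (Finset.mem_range.mp hi) (hσ _)
      _ = n * q ^ (n * t) := by rw [Finset.sum_const, Finset.card_range, smul_eq_mul]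
  have h2Z : 2 * Z.card ≤ q ^ (n * t) := by
    have h1 : q * (2 * Z.card) ≤ q * q ^ (n * t) := by
      calc q * (2 * Z.card) = 2 * (q * Z.card) := by ring
        _ ≤ 2 * (n * q ^ (n * t)) := by omega
        _ = (2 * n) * q ^ (n * t) := by ring
        _ ≤ q * q ^ (n * t) := Nat.mul_le_mul_right _ hq
    exact Nat.le_of_mul_le_mul_left h1 hq0
  have hpart : Z.card + G.card = q ^ (n * t) := by
    rw [hZ, hG, ← card_val_pow (F := F) (n := n) (t := t), ← Finset.card_univ]
    rw [add_comm]
    exact Finset.card_filter_add_card_filter_not (p := fun V => (mat P V).det ≠ 0)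
  omega



lemma pos_card_E (A B : Finset (Fin n)) :
    (univ.filter fun P : Fin n → Fin t → Fin n => ∀ i ∈ A, ∀ j, P i j ∈ B).card
      = B.card ^ (A.card * t) * n ^ ((n - A.card) * t) := by
  classical
  have hset : (univ.filter fun P : Fin n → Fin t → Fin n => ∀ i ∈ A, ∀ j, P i j ∈ B)
      = Fintype.piFinset (fun i : Fin n =>
          Fintype.piFinset (fun _ : Fin t => if i ∈ A then B else univ)) := by
    ext P
    simp only [mem_filter, mem_univ, true_and, Fintype.mem_piFinset]
    constructor
    · intro h i j
      by_cases hi : i ∈ A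
      · rw [if_pos hi]; exact h i hi j
      · rw [if_neg hi]; exact mem_univ _
    · intro h i hi j
      have := h i j
      rwa [if_pos hi] at this
  rw [hset, Fintype.card_piFinset]
  have hcards : ∀ i : Fin n,
      (Fintype.piFinset (fun _ : Fin t => if i ∈ A then B else univ)).card
      = if i ∈ A then B.card ^ t else n ^ t := by
    intro i
    rw [Fintype.card_piFinset]
    by_cases hi : i ∈ A <;> simp [hi, Finset.prod_const, Finset.card_univ]
  rw [Finset.prod_congr rfl (fun i _ => hcards i)]
  rw [← Finset.prod_mul_prod_compl A]
  rw [Finset.prod_congr rfl (fun i hi => if_pos hi),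
      Finset.prod_congr rfl (fun i hi => if_neg (Finset.mem_compl.mp hi))]
  rw [Finset.prod_const, Finset.prod_const, Finset.card_compl, Fintype.card_fin]
  rw [← pow_mul, ← pow_mul]
  ring

lemma pos_bad_subset :
    (univ.filter fun P : Fin n → Fin t → Fin n =>
        ¬ ∃ σ : Fin n → Fin n, Function.Injective σ ∧ ∀ i, ∃ j, P i j = σ i)
      ⊆ ((univ : Finset (Finset (Fin n) × Finset (Fin n))).filter
          (fun ab => ab.2.card + 1 = ab.1.card)).biUnion
          (fun ab => univ.filter fun P : Fin n → Fin t → Fin n =>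
            ∀ i ∈ ab.1, ∀ j, P i j ∈ ab.2) := by
  classical
  intro P hP
  rw [mem_filter] at hP
  have hhall : ¬ ∀ s : Finset (Fin n), s.card ≤ (s.biUnion fun i => (univ : Finset (Fin t)).image (P i)).card := by
    intro hcon
    obtain ⟨f, hfinj, hf⟩ := (Finset.all_card_le_biUnion_card_iff_exists_injective
      (fun i : Fin n => (univ : Finset (Fin t)).image (P i))).mp hcon
    apply hP.2
    refine ⟨f, hfinj, fun i => ?_⟩
    obtain ⟨j, _, hj⟩ := Finset.mem_image.mp (hf i)
    exact ⟨j, hj⟩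
  push_neg at hhall
  obtain ⟨A, hA⟩ := hhall
  set B0 := A.biUnion (fun i => (univ : Finset (Fin t)).image (P i)) with hB0
  have hB0lt : B0.card < A.card := hA
  have hAle : A.card ≤ n := by
    have := Finset.card_le_card (Finset.subset_univ A)
    simpa using this
  obtain ⟨B, hB0B, hBuniv, hBcard⟩ :=
    Finset.exists_subsuperset_card_eq (Finset.subset_univ B0) (n := A.card - 1)
      (by omega) (by simp; omega)
  rw [Finset.mem_biUnion]
  refine ⟨(A, B), ?_, ?_⟩
  · rw [Finset.mem_filter]
    refine ⟨mem_univ _, ?_⟩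
    simp only [hBcard]
    omega
  · rw [Finset.mem_filter]
    refine ⟨mem_univ _, ?_⟩
    intro i hi j
    apply hB0B
    rw [hB0]
    exact Finset.mem_biUnion.mpr ⟨i, hi, Finset.mem_image.mpr ⟨j, mem_univ _, rfl⟩⟩



lemma numeric_term {n t j : ℕ} (hn : 2 ≤ n) (ht : 1 ≤ t) (hj : j ≤ n)
    (h2t : (n : ℝ) ^ (10 : ℕ) ≤ 2 ^ t) :
    ((n.choose j : ℝ) * ((if j = 0 then 0 else (n.choose (j - 1) : ℝ))
        * (((j - 1 : ℕ) : ℝ) ^ (j * t) * (n : ℝ) ^ ((n - j) * t)))) * (n : ℝ) ^ (4 : ℕ)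
      ≤ (n : ℝ) ^ (n * t) := by
  have hn0 : (0 : ℝ) < n := by positivity
  have hn1 : (1 : ℝ) ≤ n := by exact_mod_cast Nat.one_le_of_lt hn
  have hnt : (n : ℝ) ^ (n * t) = (n : ℝ) ^ (j * t) * (n : ℝ) ^ ((n - j) * t) := by
    rw [← pow_add]
    congr 1
    have : j * t + (n - j) * t = (j + (n - j)) * t := by ring
    rw [this, Nat.add_sub_cancel' hj]
  rcases Nat.eq_zero_or_pos j with hj0 | hj1
  · subst hj0
    have : (0:ℝ) ≤ (n : ℝ) ^ (n * t) := by positivity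
    simpa using this
  rcases eq_or_lt_of_le (show 1 ≤ j by omega) with hj1' | hj2
  · -- j = 1
    have hj1'' : j = 1 := hj1'.symm
    subst hj1''
    rw [if_neg one_ne_zero]
    simp only [Nat.sub_self]
    rw [Nat.cast_zero, zero_pow (by positivity : 1 * t ≠ 0)]
    have h0 : (0:ℝ) ≤ (n : ℝ) ^ (n * t) := by positivity
    simpa using h0
  -- now 2 ≤ j
  have hj2' : 2 ≤ j := hj2
  rw [if_neg (by omega : j ≠ 0)]
  have hX0 : (0:ℝ) ≤ ((j - 1 : ℕ) : ℝ) ^ (j * t) := by positivity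
  have hY0 : (0:ℝ) ≤ (n : ℝ) ^ ((n - j) * t) := by positivity
  by_cases hcase : 2 * j ≤ n + 1
  · -- case a
    have hC1 : (n.choose j : ℝ) ≤ (n : ℝ) ^ j := by exact_mod_cast Nat.choose_le_pow n j
    have hC2 : (n.choose (j-1) : ℝ) ≤ (n : ℝ) ^ (j - 1 : ℕ) := by
      exact_mod_cast Nat.choose_le_pow n (j-1)
    have hK : (n : ℝ) ^ j * (n : ℝ) ^ (j - 1 : ℕ) * (n : ℝ) ^ (4:ℕ) = (n : ℝ) ^ (2*j + 3) := by
      rw [← pow_add, ← pow_add]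
      congr 1
      omega
    have hA2 : (n : ℝ) ^ (2*j+3) ≤ (2:ℝ) ^ (j * t) := by
      calc (n : ℝ) ^ (2*j+3) ≤ (n : ℝ) ^ (10 * j) := by
            apply pow_le_pow_right₀ hn1; omega
        _ = ((n : ℝ) ^ (10:ℕ)) ^ j := by rw [← pow_mul]
        _ ≤ ((2:ℝ) ^ t) ^ j := by
            apply pow_le_pow_left₀ (by positivity) h2t
        _ = (2:ℝ) ^ (j * t) := by rw [← pow_mul, mul_comm]
    have hA1 : ((j - 1 : ℕ) : ℝ) ^ (j * t) * (2:ℝ) ^ (j * t) ≤ (n : ℝ) ^ (j * t) := by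
      rw [← mul_pow]
      apply pow_le_pow_left₀ (by positivity)
      have : (2:ℝ) * ((j - 1 : ℕ) : ℝ) ≤ (n : ℝ) := by
        have : 2 * (j - 1) ≤ n := by omega
        exact_mod_cast this
      linarith
    calc ((n.choose j : ℝ) * ((n.choose (j-1) : ℝ)
          * (((j - 1 : ℕ) : ℝ) ^ (j * t) * (n : ℝ) ^ ((n - j) * t)))) * (n : ℝ) ^ (4:ℕ)
        ≤ ((n : ℝ) ^ j * ((n : ℝ) ^ (j - 1 : ℕ)
          * (((j - 1 : ℕ) : ℝ) ^ (j * t) * (n : ℝ) ^ ((n - j) * t)))) * (n : ℝ) ^ (4:ℕ) := by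
          apply mul_le_mul_of_nonneg_right _ (by positivity)
          apply mul_le_mul hC1 _ (by positivity) (by positivity)
          apply mul_le_mul_of_nonneg_right hC2 (by positivity)
      _ = (n : ℝ) ^ (2*j+3) * (((j - 1 : ℕ) : ℝ) ^ (j * t)) * (n : ℝ) ^ ((n - j) * t) := by
          rw [← hK]; ring
      _ ≤ (2:ℝ) ^ (j * t) * (((j - 1 : ℕ) : ℝ) ^ (j * t)) * (n : ℝ) ^ ((n - j) * t) := by
          apply mul_le_mul_of_nonneg_right _ hY0
          exact mul_le_mul_of_nonneg_right hA2 hX0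
      _ ≤ (n : ℝ) ^ (j * t) * (n : ℝ) ^ ((n - j) * t) := by
          apply mul_le_mul_of_nonneg_right _ hY0
          rw [mul_comm]; exact hA1
      _ = (n : ℝ) ^ (n * t) := hnt.symm
  · -- case b
    set m := n + 1 - j with hm
    have hm1 : 1 ≤ m := by omega
    have hjm : j - 1 = n - m := by omega
    have hn2j : n ≤ 2 * j := by omega
    set E := Real.exp ((m : ℝ) / n) ^ (j * t) with hE
    have hE0 : (0:ℝ) < Real.exp ((m : ℝ) / n) := Real.exp_pos _
    have hC1 : (n.choose j : ℝ) ≤ (n : ℝ) ^ (m - 1 : ℕ) := by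
      have h1 : n.choose j = n.choose (n - j) := (Nat.choose_symm hj).symm
      have h2 : n - j = m - 1 := by omega
      rw [h1, h2]
      exact_mod_cast Nat.choose_le_pow n (m-1)
    have hC2 : (n.choose (j-1) : ℝ) ≤ (n : ℝ) ^ (m : ℕ) := by
      have h1 : n.choose (j-1) = n.choose (n - (j-1)) := (Nat.choose_symm (by omega)).symm
      have h2 : n - (j - 1) = m := by omega
      rw [h1, h2]
      exact_mod_cast Nat.choose_le_pow n m
    have hK : (n : ℝ) ^ (m - 1 : ℕ) * (n : ℝ) ^ (m : ℕ) * (n : ℝ) ^ (4:ℕ)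
        = (n : ℝ) ^ (2*m + 3) := by
      rw [← pow_add, ← pow_add]
      congr 1
      omega
    -- B1
    have hcast : ((j - 1 : ℕ) : ℝ) = (n : ℝ) - (m : ℝ) := by
      rw [hjm]
      have : (m:ℕ) ≤ n := by omega
      push_cast [Nat.cast_sub this]
      ring
    have hmn : (m:ℝ) ≤ n := by exact_mod_cast (by omega : m ≤ n)
    have hB1 : ((j - 1 : ℕ) : ℝ) ^ (j * t) * E ≤ (n : ℝ) ^ (j * t) := by
      rw [hcast, hE, ← mul_pow]
      apply pow_le_pow_left₀ (mul_nonneg (by linarith) (le_of_lt hE0))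
      have h1 : -( (m:ℝ)/n ) + 1 ≤ Real.exp (-((m:ℝ)/n)) := Real.add_one_le_exp _
      have h2 : (n:ℝ) - m ≤ n * Real.exp (-((m:ℝ)/n)) := by
        have h3 := mul_le_mul_of_nonneg_left h1 (le_of_lt hn0)
        calc (n:ℝ) - m = (n:ℝ) * (-((m:ℝ)/n) + 1) := by field_simp; ring
          _ ≤ n * Real.exp (-((m:ℝ)/n)) := h3
      calc ((n:ℝ) - m) * Real.exp ((m:ℝ)/n)
          ≤ n * Real.exp (-((m:ℝ)/n)) * Real.exp ((m:ℝ)/n) := by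
            apply mul_le_mul_of_nonneg_right h2 (le_of_lt hE0)
        _ = n := by rw [mul_assoc, ← Real.exp_add]; simp
    -- B2
    have hB2 : (n : ℝ) ^ (2*m+3) ≤ E := by
      have hsq : ((n : ℝ) ^ (2*m+3)) ^ 2 ≤ E ^ 2 := by
        have e1 : ((n : ℝ) ^ (2*m+3)) ^ 2 = (n : ℝ) ^ (2*(2*m+3)) := by
          rw [← pow_mul, mul_comm]
        have e2 : E ^ 2 = Real.exp ((2 * j * t : ℕ) * ((m:ℝ)/n)) := by
          rw [hE, ← pow_mul, ← Real.exp_nat_mul]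
          congr 1
          push_cast; ring
        rw [e1, e2]
        calc (n : ℝ) ^ (2*(2*m+3)) ≤ (n : ℝ) ^ (10 * m) := by
              apply pow_le_pow_right₀ hn1; omega
          _ = ((n : ℝ) ^ (10:ℕ)) ^ m := by rw [← pow_mul]
          _ ≤ ((2:ℝ) ^ t) ^ m := pow_le_pow_left₀ (by positivity) h2t m
          _ = (2:ℝ) ^ (t * m) := by rw [← pow_mul]
          _ ≤ Real.exp 1 ^ (t * m) := by
              apply pow_le_pow_left₀ (by norm_num)
              have := Real.add_one_le_exp 1
              linarith
          _ = Real.exp ((t * m : ℕ) : ℝ) := by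
              rw [← Real.exp_nat_mul]; congr 1; ring
          _ ≤ Real.exp ((2 * j * t : ℕ) * ((m:ℝ)/n)) := by
              apply Real.exp_le_exp.mpr
              rw [mul_div_assoc' ((2 * j * t : ℕ):ℝ) (m:ℝ) (n:ℝ), le_div_iff₀ hn0]
              have hcast2 : (n:ℝ) ≤ 2 * (j:ℝ) := by exact_mod_cast hn2j
              have ht0 : (0:ℝ) ≤ (t:ℝ) := by positivity
              have hm0 : (0:ℝ) ≤ (m:ℝ) := by positivity
              push_cast
              nlinarith [mul_nonneg ht0 hm0]
      exact (pow_le_pow_iff_left₀ (by positivity) (by positivity) two_ne_zero).mp hsq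
    calc ((n.choose j : ℝ) * ((n.choose (j-1) : ℝ)
          * (((j - 1 : ℕ) : ℝ) ^ (j * t) * (n : ℝ) ^ ((n - j) * t)))) * (n : ℝ) ^ (4:ℕ)
        ≤ ((n : ℝ) ^ (m - 1 : ℕ) * ((n : ℝ) ^ (m : ℕ)
          * (((j - 1 : ℕ) : ℝ) ^ (j * t) * (n : ℝ) ^ ((n - j) * t)))) * (n : ℝ) ^ (4:ℕ) := by
          apply mul_le_mul_of_nonneg_right _ (by positivity)
          apply mul_le_mul hC1 _ (by positivity) (by positivity)
          apply mul_le_mul_of_nonneg_right hC2 (by positivity)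
      _ = (n : ℝ) ^ (2*m+3) * (((j - 1 : ℕ) : ℝ) ^ (j * t)) * (n : ℝ) ^ ((n - j) * t) := by
          rw [← hK]; ring
      _ ≤ E * (((j - 1 : ℕ) : ℝ) ^ (j * t)) * (n : ℝ) ^ ((n - j) * t) := by
          apply mul_le_mul_of_nonneg_right _ hY0
          exact mul_le_mul_of_nonneg_right hB2 hX0
      _ ≤ (n : ℝ) ^ (j * t) * (n : ℝ) ^ ((n - j) * t) := by
          apply mul_le_mul_of_nonneg_right _ hY0
          rw [mul_comm]; exact hB1
      _ = (n : ℝ) ^ (n * t) := hnt.symm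


lemma numeric_sum {n t : ℕ} (hn : 2 ≤ n) (ht : 1 ≤ t) (h2t : (n : ℝ) ^ (10:ℕ) ≤ 2 ^ t) :
    2 * ∑ j ∈ Finset.range (n+1), n.choose j *
      ((if j = 0 then 0 else n.choose (j-1)) * ((j-1) ^ (j*t) * n ^ ((n-j)*t)))
      ≤ n ^ (n*t) := by
  have hcast : ((2 * ∑ j ∈ Finset.range (n+1), n.choose j *
      ((if j = 0 then 0 else n.choose (j-1)) * ((j-1) ^ (j*t) * n ^ ((n-j)*t))) : ℕ) : ℝ)
      ≤ ((n ^ (n*t) : ℕ) : ℝ) := by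
    push_cast
    have hn0 : (0:ℝ) < n := by positivity
    have hn1 : (2:ℝ) ≤ n := by exact_mod_cast hn
    set f : ℕ → ℝ := fun j => (n.choose j : ℝ) *
      ((if j = 0 then 0 else (n.choose (j-1) : ℝ)) * (((j-1:ℕ):ℝ) ^ (j*t) * (n:ℝ) ^ ((n-j)*t)))
      with hf
    have hB : ∀ j ∈ Finset.range (n+1), f j ≤ (n:ℝ) ^ (n*t) / (2*(n+1)) := by
      intro j hj
      rw [le_div_iff₀ (by positivity)]
      have hjn : j ≤ n := Nat.lt_succ_iff.mp (Finset.mem_range.mp hj)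
      have h4 : (2:ℝ) * ((n:ℝ)+1) ≤ (n:ℝ) ^ (4:ℕ) := by
        have h2 : (n:ℝ)^(4:ℕ) = ((n:ℝ)^2)^2 := by ring
        nlinarith [sq_nonneg ((n:ℝ) - 1), sq_nonneg (n:ℝ), sq_nonneg ((n:ℝ)^2 - 2)]
      have hf0 : 0 ≤ f j := by
        rw [hf]
        by_cases h : j = 0 <;> simp [h] <;> positivity
      calc f j * (2 * ((n:ℝ)+1)) ≤ f j * (n:ℝ) ^ (4:ℕ) := by
            apply mul_le_mul_of_nonneg_left h4 hf0
        _ ≤ (n:ℝ) ^ (n*t) := numeric_term hn ht hjn h2t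
    have hsum := Finset.sum_le_sum hB
    rw [Finset.sum_const] at hsum
    have hcard : (Finset.range (n+1)).card = n+1 := Finset.card_range _
    rw [hcard] at hsum
    have : ((n+1) : ℕ) • ((n:ℝ) ^ (n*t) / (2*(n+1))) = ((n:ℝ)+1) * ((n:ℝ)^(n*t) / (2*((n:ℝ)+1))) := by
      rw [nsmul_eq_mul]; push_cast; ring
    rw [this] at hsum
    have heq : ((n:ℝ)+1) * ((n:ℝ)^(n*t) / (2*((n:ℝ)+1))) = (n:ℝ)^(n*t)/2 := by
      field_simp
    rw [heq] at hsum
    -- conclude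
    have := mul_le_mul_of_nonneg_left hsum (by norm_num : (0:ℝ) ≤ 2)
    calc 2 * ∑ j ∈ Finset.range (n+1), f j ≤ 2 * ((n:ℝ)^(n*t)/2) := this
      _ = (n:ℝ)^(n*t) := by ring
  exact_mod_cast hcast


lemma card_pos_univ {n t : ℕ} :
    Fintype.card (Fin n → Fin t → Fin n) = n ^ (n * t) := by
  simp only [Fintype.card_fun, Fintype.card_fin]
  rw [mul_comm, pow_mul]

lemma pos_count {n t : ℕ} (hn : 2 ≤ n) (ht : 1 ≤ t) (h2t : (n : ℝ) ^ (10:ℕ) ≤ 2 ^ t) :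
    n ^ (n * t) ≤ 2 * (univ.filter fun P : Fin n → Fin t → Fin n =>
      ∃ σ : Fin n → Fin n, Function.Injective σ ∧ ∀ i, ∃ j, P i j = σ i).card := by
  classical
  set good := univ.filter fun P : Fin n → Fin t → Fin n =>
      ∃ σ : Fin n → Fin n, Function.Injective σ ∧ ∀ i, ∃ j, P i j = σ i with hgood
  set bad := univ.filter fun P : Fin n → Fin t → Fin n =>
      ¬ ∃ σ : Fin n → Fin n, Function.Injective σ ∧ ∀ i, ∃ j, P i j = σ i with hbad
  have hbadsum : bad.card ≤ ∑ j ∈ Finset.range (n+1), n.choose j *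
      ((if j = 0 then 0 else n.choose (j-1)) * ((j-1) ^ (j*t) * n ^ ((n-j)*t))) := by
    have h1 : bad.card ≤ ∑ ab ∈ ((univ : Finset (Finset (Fin n) × Finset (Fin n))).filter
        (fun ab => ab.2.card + 1 = ab.1.card)),
        (univ.filter fun P : Fin n → Fin t → Fin n => ∀ i ∈ ab.1, ∀ j, P i j ∈ ab.2).card :=
      le_trans (Finset.card_le_card pos_bad_subset) Finset.card_biUnion_le
    have h2 : ∀ ab : Finset (Fin n) × Finset (Fin n),
        (univ.filter fun P : Fin n → Fin t → Fin n => ∀ i ∈ ab.1, ∀ j, P i j ∈ ab.2).card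
        = ab.2.card ^ (ab.1.card * t) * n ^ ((n - ab.1.card) * t) := fun ab => pos_card_E _ _
    rw [Finset.sum_congr rfl (fun ab _ => h2 ab)] at h1
    -- now regroup
    rw [Finset.sum_filter] at h1
    rw [Fintype.sum_prod_type] at h1
    -- bound inner sums
    have h3 : ∀ A : Finset (Fin n),
        (∑ B : Finset (Fin n), if B.card + 1 = A.card then
            B.card ^ (A.card * t) * n ^ ((n - A.card) * t) else 0)
        ≤ (if A.card = 0 then 0 else n.choose (A.card - 1))
            * ((A.card - 1) ^ (A.card * t) * n ^ ((n - A.card) * t)) := by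
      intro A
      have hcongr : ∀ B : Finset (Fin n),
          (if B.card + 1 = A.card then B.card ^ (A.card * t) * n ^ ((n - A.card) * t) else 0)
          = (if B.card + 1 = A.card then
              (A.card - 1) ^ (A.card * t) * n ^ ((n - A.card) * t) else 0) := by
        intro B
        by_cases h : B.card + 1 = A.card
        · rw [if_pos h, if_pos h]
          congr 2
          omega
        · rw [if_neg h, if_neg h]
      rw [Finset.sum_congr rfl (fun B _ => hcongr B)]
      rw [← Finset.sum_filter, Finset.sum_const, smul_eq_mul]
      apply Nat.mul_le_mul_right
      by_cases hA : A.card = 0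
      · rw [if_pos hA]
        have : (univ.filter fun B : Finset (Fin n) => B.card + 1 = A.card) = ∅ := by
          apply Finset.filter_false_of_mem
          intro B _
          omega
        rw [this]
        simp
      · rw [if_neg hA]
        have hsub : (univ.filter fun B : Finset (Fin n) => B.card + 1 = A.card)
            ⊆ Finset.powersetCard (A.card - 1) univ := by
          intro B hB
          rw [Finset.mem_filter] at hB
          rw [Finset.mem_powersetCard]
          exact ⟨Finset.subset_univ _, by omega⟩
        calc (univ.filter fun B : Finset (Fin n) => B.card + 1 = A.card).card
            ≤ (Finset.powersetCard (A.card - 1) (univ : Finset (Fin n))).card :=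
              Finset.card_le_card hsub
          _ = n.choose (A.card - 1) := by
              rw [Finset.card_powersetCard, Finset.card_univ, Fintype.card_fin]
    have h4 : (∑ A : Finset (Fin n), ∑ B : Finset (Fin n),
        if B.card + 1 = A.card then B.card ^ (A.card * t) * n ^ ((n - A.card) * t) else 0)
        ≤ ∑ A : Finset (Fin n), (if A.card = 0 then 0 else n.choose (A.card - 1))
          * ((A.card - 1) ^ (A.card * t) * n ^ ((n - A.card) * t)) :=
      Finset.sum_le_sum (fun A _ => h3 A)
    -- sum over A by cardinality
    have h5 : (∑ A : Finset (Fin n), (if A.card = 0 then 0 else n.choose (A.card - 1))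
          * ((A.card - 1) ^ (A.card * t) * n ^ ((n - A.card) * t)))
        = ∑ j ∈ Finset.range (n+1), n.choose j *
          ((if j = 0 then 0 else n.choose (j-1)) * ((j-1) ^ (j*t) * n ^ ((n-j)*t))) := by
      have := Finset.sum_powerset (univ : Finset (Fin n))
        (fun A => (if A.card = 0 then 0 else n.choose (A.card - 1))
          * ((A.card - 1) ^ (A.card * t) * n ^ ((n - A.card) * t)))
      rw [Finset.powerset_univ] at this
      rw [this, Finset.card_univ, Fintype.card_fin]
      apply Finset.sum_congr rfl
      intro j hj
      have hinner : ∀ A ∈ Finset.powersetCard j (univ : Finset (Fin n)),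
          (if A.card = 0 then 0 else n.choose (A.card - 1))
            * ((A.card - 1) ^ (A.card * t) * n ^ ((n - A.card) * t))
          = (if j = 0 then 0 else n.choose (j - 1)) * ((j-1) ^ (j*t) * n ^ ((n-j)*t)) := by
        intro A hA
        have : A.card = j := (Finset.mem_powersetCard.mp hA).2
        rw [this]
      rw [Finset.sum_congr rfl hinner, Finset.sum_const, Finset.card_powersetCard,
        Finset.card_univ, Fintype.card_fin, smul_eq_mul]
    calc bad.card ≤ _ := h1
      _ ≤ _ := h4
      _ = _ := h5
  have hpart : bad.card + good.card = n ^ (n * t) := by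
    rw [hbad, hgood, ← card_pos_univ (n := n) (t := t), ← Finset.card_univ, add_comm]
    exact Finset.card_filter_add_card_filter_not
      (p := fun P : Fin n → Fin t → Fin n =>
        ∃ σ : Fin n → Fin n, Function.Injective σ ∧ ∀ i, ∃ j, P i j = σ i)
  have := numeric_sum (t := t) hn ht h2t
  omega


lemma card_omega : Fintype.card (Fin n → Fin t → Fin n × F)
    = n ^ (n * t) * Fintype.card F ^ (n * t) := by
  simp only [Fintype.card_fun, Fintype.card_prod, Fintype.card_fin]
  rw [← pow_mul, mul_comm t n, mul_pow]

end AuxRandomSparse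

/-- **Random sparse matrices are nonsingular with constant probability.**
There are `c > 0` and `n₀` such that for every `n ≥ n₀` and every finite
field `F` with `|F| ≥ 2n`, if each row of an `n×n` matrix is formed by
sampling `t = ⌈10·log₂ n⌉` position–value pairs independently and uniformly
(summing values landing on the same position), then the resulting matrix is
nonsingular with probability at least `c`.  Probability is measured by
counting sample points `ω : Fin n → Fin t → Fin n × F` (all `n·t` pairs
independent and uniform). -/
theorem random_sparse_matrix_nonsingular :
    ∃ c : ℝ, c > 0 ∧ ∃ n₀ : ℕ, ∀ n : ℕ, n₀ ≤ n →
      ∀ (F : Type) [Field F] [Fintype F] [DecidableEq F],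
        2 * n ≤ Fintype.card F →
        ∀ t : ℕ, t = ⌈10 * Real.logb 2 n⌉₊ →
          c * (Fintype.card (Fin n → Fin t → Fin n × F) : ℝ)
            ≤ ((Finset.univ.filter (fun ω : Fin n → Fin t → Fin n × F =>
                  (Matrix.of fun i k : Fin n =>
                      ∑ j : Fin t, if (ω i j).1 = k then (ω i j).2 else 0).det ≠ 0)).card : ℝ) := by
  classical
  refine ⟨1/4, by norm_num, 2, ?_⟩
  intro n hn F _ _ _ hF t htdef
  have hn1 : 1 ≤ n := by omega
  have hn0 : (0:ℝ) < n := by positivity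
  have hn2 : (2:ℝ) ≤ n := by exact_mod_cast hn
  -- basic facts about t
  have hlogb1 : (1:ℝ) ≤ Real.logb 2 n := by
    have h := Real.logb_le_logb_of_le (b := 2) (by norm_num) (by norm_num) hn2
    rwa [Real.logb_self_eq_one (by norm_num)] at h
  have ht1 : 1 ≤ t := by
    rw [htdef]
    have : (0:ℝ) < 10 * Real.logb 2 n := by linarith
    exact Nat.ceil_pos.mpr this
  have h2t : (n : ℝ) ^ (10:ℕ) ≤ 2 ^ t := by
    have hle : (10:ℝ) * Real.logb 2 n ≤ (t:ℝ) := by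
      rw [htdef]; exact Nat.le_ceil _
    have h1 : (n:ℝ) ^ (10:ℕ) = (2:ℝ) ^ ((10:ℝ) * Real.logb 2 n) := by
      rw [mul_comm, Real.rpow_mul (by norm_num), Real.rpow_logb (by norm_num) (by norm_num) hn0]
      rw [← Real.rpow_natCast ((n:ℝ)) 10]
      norm_num
    rw [h1, ← Real.rpow_natCast (2:ℝ) t]
    exact Real.rpow_le_rpow_of_exponent_le (by norm_num) hle
  set q := Fintype.card F with hq
  -- the good set
  set G := Finset.univ.filter (fun ω : Fin n → Fin t → Fin n × F =>
      (Matrix.of fun i k : Fin n =>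
        ∑ j : Fin t, if (ω i j).1 = k then (ω i j).2 else 0).det ≠ 0) with hG
  -- fibration over positions
  have hfiber : G.card = ∑ P : Fin n → Fin t → Fin n,
      (G.filter (fun ω => (fun i j => (ω i j).1) = P)).card := by
    exact Finset.card_eq_sum_card_fiberwise (fun ω _ => Finset.mem_univ _)
  have hfibereq : ∀ P : Fin n → Fin t → Fin n,
      (G.filter (fun ω => (fun i j => (ω i j).1) = P)).card
      = (Finset.univ.filter fun V : Fin n → Fin t → F => (mat P V).det ≠ 0).card := by
    intro P
    refine Finset.card_bij' (fun ω _ => fun i j => (ω i j).2)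
      (fun V _ => fun i j => (P i j, V i j)) ?_ ?_ ?_ ?_
    · intro ω hω
      have hω2 : (fun i j => (ω i j).1) = P := (Finset.mem_filter.mp hω).2
      have hω1 : (Matrix.of fun i k : Fin n =>
          ∑ j : Fin t, if (ω i j).1 = k then (ω i j).2 else 0).det ≠ 0 :=
        (Finset.mem_filter.mp ((Finset.mem_filter.mp hω).1)).2
      rw [Finset.mem_filter]
      refine ⟨Finset.mem_univ _, ?_⟩
      have heqm : (Matrix.of fun i k : Fin n =>
          ∑ j : Fin t, if (ω i j).1 = k then (ω i j).2 else 0)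
          = mat P (fun i j => (ω i j).2) := by
        unfold mat
        ext i k
        simp only [Matrix.of_apply]
        apply Finset.sum_congr rfl
        intro j _
        rw [← hω2]
      rw [← heqm]
      exact hω1
    · intro V hV
      have hV2 : (mat P V).det ≠ 0 := (Finset.mem_filter.mp hV).2
      rw [Finset.mem_filter]
      refine ⟨?_, rfl⟩
      rw [hG, Finset.mem_filter]
      exact ⟨Finset.mem_univ _, hV2⟩
    · intro ω hω
      have hω2 : (fun i j => (ω i j).1) = P := (Finset.mem_filter.mp hω).2
      funext i j
      simp only
      rw [← hω2]
    · intro V hV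
      rfl
  -- good positions
  set goodP := Finset.univ.filter (fun P : Fin n → Fin t → Fin n =>
      ∃ σ : Fin n → Fin n, Function.Injective σ ∧ ∀ i, ∃ j, P i j = σ i) with hgoodP
  have hval : ∀ P ∈ goodP, q ^ (n * t)
      ≤ 2 * (Finset.univ.filter fun V : Fin n → Fin t → F => (mat P V).det ≠ 0).card := by
    intro P hP
    rw [hgoodP, Finset.mem_filter] at hP
    obtain ⟨-, σ0, hσinj, hσ⟩ := hP
    have hbij : Function.Bijective σ0 := Finite.injective_iff_bijective.mp hσinj
    exact values_count hn1 hF P (Equiv.ofBijective σ0 hbij) hσ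
  have hposcnt : n ^ (n * t) ≤ 2 * goodP.card := pos_count (n := n) (t := t) hn ht1 h2t
  -- combine
  have hmain : n ^ (n * t) * q ^ (n * t) ≤ 4 * G.card := by
    calc n ^ (n * t) * q ^ (n * t) ≤ (2 * goodP.card) * q ^ (n * t) :=
          Nat.mul_le_mul_right _ hposcnt
      _ = ∑ _P ∈ goodP, 2 * q ^ (n * t) := by
          rw [Finset.sum_const, smul_eq_mul]; ring
      _ ≤ ∑ P ∈ goodP, 2 * (2 * (Finset.univ.filter
            fun V : Fin n → Fin t → F => (mat P V).det ≠ 0).card) := by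
          apply Finset.sum_le_sum
          intro P hP
          exact Nat.mul_le_mul_left 2 (hval P hP)
      _ = ∑ P ∈ goodP, 4 * (Finset.univ.filter
            fun V : Fin n → Fin t → F => (mat P V).det ≠ 0).card := by
          apply Finset.sum_congr rfl
          intro P _
          ring
      _ ≤ ∑ P : Fin n → Fin t → Fin n, 4 * (Finset.univ.filter
            fun V : Fin n → Fin t → F => (mat P V).det ≠ 0).card := by
          apply Finset.sum_le_sum_of_subset_of_nonneg (Finset.subset_univ goodP)
          intro P _ _
          exact Nat.zero_le _
      _ = 4 * G.card := by
          rw [hfiber, Finset.mul_sum]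
          apply Finset.sum_congr rfl
          intro P _
          rw [hfibereq]
  -- conclude over ℝ
  have hcard : Fintype.card (Fin n → Fin t → Fin n × F) = n ^ (n * t) * q ^ (n * t) :=
    card_omega
  have hcast : ((Fintype.card (Fin n → Fin t → Fin n × F) : ℕ) : ℝ) ≤ 4 * (G.card : ℝ) := by
    rw [hcard]
    exact_mod_cast hmain
  rw [hG] at hcast ⊢
  linarith
end

section
/- Let ι be a finite index set and for each i ∈ ι let αᵢ be a finite nonempty type. Let p be a probability mass function on the product type Π_{i∈ι} αᵢ (i.e., p : (Π_i αᵢ) → ℝ≥0 with total mass 1), and for each i let pᵢ denote its i-th marginal, pᵢ(a) = ∑_{x : x_i = a} p(x). Then H(p) ≤ ∑_{i∈ι} H(pᵢ), where H(q) = ∑_x −q(x)·log₂ q(x) denotes Shannon entropy (with the convention 0·log₂ 0 = 0). In other words, among all joint distributions with given marginals, the independent (product) distribution maximizes Shannon entropy. -/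
/-- **Independence maximizes entropy given the marginals.**
If `p` is a probability mass function on a finite product `Π i, α i`, then
its Shannon entropy is at most the sum of the entropies of its marginals. -/
theorem entropy_le_sum_entropy_marginals
    {ι : Type*} [Fintype ι] [DecidableEq ι]
    {α : ι → Type*} [∀ i, Fintype (α i)] [∀ i, DecidableEq (α i)]
    [∀ i, Nonempty (α i)]
    (p : (∀ i, α i) → ℝ) (hp : ∀ x, 0 ≤ p x) (hp1 : ∑ x, p x = 1) :
    ∑ x, -(p x * Real.logb 2 (p x))
      ≤ ∑ i, ∑ a : α i,
          -((∑ x ∈ Finset.univ.filter (fun x : ∀ i, α i => x i = a), p x)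
            * Real.logb 2 (∑ x ∈ Finset.univ.filter (fun x : ∀ i, α i => x i = a), p x)) := by
  classical
  set m : ∀ i, α i → ℝ := fun i a => ∑ x ∈ Finset.univ.filter (fun x : ∀ i, α i => x i = a), p x
    with hm
  set q : (∀ i, α i) → ℝ := fun x => ∏ i, m i (x i) with hq
  have hm0 : ∀ i a, 0 ≤ m i a := fun i a => Finset.sum_nonneg fun x _ => hp x
  have hmsum : ∀ i, ∑ a, m i a = 1 := by
    intro i
    rw [hm]
    rw [Finset.sum_fiberwise_of_maps_to (fun x _ => Finset.mem_univ (x i)) p, hp1]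
  -- marginal dominates p
  have hmp : ∀ i x, p x ≤ m i (x i) := by
    intro i x
    refine Finset.single_le_sum (fun y _ => hp y) ?_
    simp
  have hq0 : ∀ x, 0 ≤ q x := fun x => Finset.prod_nonneg fun i _ => hm0 i (x i)
  have hqpos : ∀ x, 0 < p x → 0 < q x := fun x hx =>
    Finset.prod_pos fun i _ => lt_of_lt_of_le hx (hmp i x)
  have hqsum : ∑ x, q x = 1 := by
    rw [hq]
    rw [← Fintype.prod_sum]
    simp [hmsum]
  -- Gibbs pointwise
  have gibbs : ∀ x, -(p x * Real.logb 2 (p x))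
      ≤ -(p x * Real.logb 2 (q x)) + (q x - p x) / Real.log 2 := by
    intro x
    rcases eq_or_lt_of_le (hp x) with h | h
    · simp only [← h]
      have : 0 ≤ q x / Real.log 2 := div_nonneg (hq0 x) (Real.log_nonneg one_le_two)
      simpa using this
    · have hq' := hqpos x h
      have key : p x * Real.log (q x / p x) ≤ q x - p x := by
        calc p x * Real.log (q x / p x) ≤ p x * (q x / p x - 1) :=
              mul_le_mul_of_nonneg_left (Real.log_le_sub_one_of_pos (div_pos hq' h)) (hp x)
          _ = q x - p x := by field_simp
      rw [Real.log_div (ne_of_gt hq') (ne_of_gt h)] at key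
      have hl2 : (0:ℝ) < Real.log 2 := Real.log_pos one_lt_two
      have key2 : -(p x * Real.log (p x)) ≤ -(p x * Real.log (q x)) + (q x - p x) := by
        nlinarith [key]
      rw [Real.logb, Real.logb,
        show -(p x * (Real.log (p x) / Real.log 2)) = -(p x * Real.log (p x)) / Real.log 2
          from by ring,
        show -(p x * (Real.log (q x) / Real.log 2)) + (q x - p x) / Real.log 2
            = (-(p x * Real.log (q x)) + (q x - p x)) / Real.log 2 from by ring]
      exact (div_le_div_iff_of_pos_right hl2).mpr key2
  calc ∑ x, -(p x * Real.logb 2 (p x))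
      ≤ ∑ x, (-(p x * Real.logb 2 (q x)) + (q x - p x) / Real.log 2) :=
        Finset.sum_le_sum fun x _ => gibbs x
    _ = ∑ x, -(p x * Real.logb 2 (q x)) := by
        rw [Finset.sum_add_distrib, ← Finset.sum_div, Finset.sum_sub_distrib, hqsum, hp1]
        simp
    _ = ∑ x, ∑ i, -(p x * Real.logb 2 (m i (x i))) := by
        refine Finset.sum_congr rfl fun x _ => ?_
        rcases eq_or_lt_of_le (hp x) with h | h
        · simp [← h]
        · rw [hq, Real.logb_prod _ _ (fun i _ => ne_of_gt (lt_of_lt_of_le h (hmp i x)))]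
          rw [Finset.mul_sum, ← Finset.sum_neg_distrib]
    _ = ∑ i, ∑ x, -(p x * Real.logb 2 (m i (x i))) := Finset.sum_comm
    _ = _ := by
        refine Finset.sum_congr rfl fun i _ => ?_
        rw [← Finset.sum_fiberwise_of_maps_to (fun x _ => Finset.mem_univ (x i))
          (fun x => -(p x * Real.logb 2 (m i (x i))))]
        refine Finset.sum_congr rfl fun a _ => ?_
        show _ = -(m i a * Real.logb 2 (m i a))
        rw [show (∑ x ∈ Finset.univ.filter (fun x : ∀ i, α i => x i = a),
              -(p x * Real.logb 2 (m i (x i))))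
            = ∑ x ∈ Finset.univ.filter (fun x : ∀ i, α i => x i = a),
              -(p x * Real.logb 2 (m i a)) from
          Finset.sum_congr rfl fun x hx => by rw [(Finset.mem_filter.mp hx).2]]
        rw [show ∀ c : ℝ, (∑ x ∈ Finset.univ.filter (fun x : ∀ i, α i => x i = a),
              -(p x * c)) = -((∑ x ∈ Finset.univ.filter (fun x : ∀ i, α i => x i = a), p x) * c)
          from fun c => by rw [Finset.sum_mul]; exact Finset.sum_neg_distrib _]
end

section
/- Let V, B, a, s be natural numbers with 0 < a < B, V ≥ 2B, and B − a ≤ s ≤ B + a. Then, as real numbers, (V choose s) ≤ (V choose (B − a)) · (V/(B − a))^{2a}. -/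
/-- For `0 < a < B`, `V ≥ 2B`, and `B − a ≤ s ≤ B + a`, one has
`(V choose s) ≤ (V choose (B − a)) · (V/(B − a))^{2a}` over the reals. -/
theorem choose_le_choose_mul_ratio_pow (V B a s : ℕ)
    (ha : 0 < a) (haB : a < B) (hV : 2 * B ≤ V)
    (hs₁ : B - a ≤ s) (hs₂ : s ≤ B + a) :
    ((V.choose s : ℝ))
      ≤ (V.choose (B - a) : ℝ) * ((V : ℝ) / ((B : ℝ) - (a : ℝ))) ^ (2 * a) := by
  set m := B - a with hm_def
  have hm : 0 < m := Nat.sub_pos_of_lt haB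
  have hmR : (0:ℝ) < (m:ℝ) := by exact_mod_cast hm
  have hcast : ((B:ℝ) - (a:ℝ)) = (m:ℝ) := by
    rw [hm_def, Nat.cast_sub haB.le]
  have hmV : m ≤ V := le_trans (le_trans (Nat.sub_le B a) (by omega)) hV
  have hone : (1:ℝ) ≤ (V:ℝ)/(m:ℝ) := by
    rw [le_div_iff₀ hmR]; exact_mod_cast by simpa using hmV
  have key : ∀ j, (V.choose (m + j) : ℝ) ≤ (V.choose m : ℝ) * ((V:ℝ)/(m:ℝ))^j := by
    intro j
    induction j with
    | zero => simp
    | succ j ih =>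
      have h1 : (V.choose (m+j+1) : ℝ) * ((m:ℝ)+j+1) = (V.choose (m+j) : ℝ) * ((V - (m+j) : ℕ) : ℝ) := by
        have := Nat.choose_succ_right_eq V (m+j)
        exact_mod_cast congrArg (Nat.cast : ℕ → ℝ) this
      have hden : (0:ℝ) < (m:ℝ)+j+1 := by positivity
      have h2 : (V.choose (m+j+1) : ℝ) = (V.choose (m+j) : ℝ) * ((V - (m+j) : ℕ) : ℝ) / ((m:ℝ)+j+1) := by
        field_simp
        linarith [h1]
      rw [show m + (j+1) = m + j + 1 from rfl, h2]
      have hnum : ((V - (m+j) : ℕ) : ℝ) ≤ (V:ℝ) := by exact_mod_cast Nat.sub_le V (m+j)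
      have hratio : ((V - (m+j) : ℕ) : ℝ) / ((m:ℝ)+j+1) ≤ (V:ℝ)/(m:ℝ) := by
        apply div_le_div₀ (by positivity) hnum hmR (by linarith)
      calc (V.choose (m+j) : ℝ) * ((V - (m+j) : ℕ) : ℝ) / ((m:ℝ)+j+1)
          = (V.choose (m+j) : ℝ) * (((V - (m+j) : ℕ) : ℝ) / ((m:ℝ)+j+1)) := by ring
        _ ≤ ((V.choose m : ℝ) * ((V:ℝ)/(m:ℝ))^j) * ((V:ℝ)/(m:ℝ)) := by
            apply mul_le_mul ih hratio (by positivity)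
            positivity
        _ = (V.choose m : ℝ) * ((V:ℝ)/(m:ℝ))^(j+1) := by ring
  have hs : s = m + (s - m) := by omega
  have hj : s - m ≤ 2 * a := by omega
  calc (V.choose s : ℝ) = (V.choose (m + (s - m)) : ℝ) := by rw [← hs]
    _ ≤ (V.choose m : ℝ) * ((V:ℝ)/(m:ℝ))^(s - m) := key _
    _ ≤ (V.choose m : ℝ) * ((V:ℝ)/(m:ℝ))^(2*a) := by
        apply mul_le_mul_of_nonneg_left (pow_le_pow_right₀ hone hj) (by positivity)
    _ = (V.choose m : ℝ) * ((V:ℝ)/((B:ℝ)-(a:ℝ)))^(2*a) := by rw [hcast]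
end

section
/- For every natural number n ≥ 2 and every natural number t with t ≥ 10·log₂ n, ∑_{i=1}^{⌈n/2⌉ − 1} (n choose i)·(n choose (i−1))·((i−1)/n)^{i·t} ≤ 1/n, where the sum and all terms are taken over the real numbers. -/
/-- The "small sets" part of the union bound: for `n ≥ 2` and `t ≥ 10·log₂ n`,
`∑_{i=1}^{⌈n/2⌉−1} (n choose i)(n choose (i−1))((i−1)/n)^{i·t} ≤ 1/n`. -/
theorem hall_union_bound_small_sets (n t : ℕ) (hn : 2 ≤ n)
    (ht : 10 * Real.logb 2 n ≤ (t : ℝ)) :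
    ∑ i ∈ Finset.Ico 1 ((n + 1) / 2),
        (n.choose i : ℝ) * (n.choose (i - 1) : ℝ)
          * (((i : ℝ) - 1) / (n : ℝ)) ^ (i * t)
      ≤ 1 / (n : ℝ) := by
  have hn0 : (0:ℝ) < n := by positivity
  have hn1 : (1:ℝ) ≤ n := by exact_mod_cast le_trans (by norm_num) hn
  have hlogb : (1:ℝ) ≤ Real.logb 2 n := by
    have := Real.logb_le_logb_of_le (b := 2) (by norm_num) (by norm_num : (0:ℝ) < 2)
      (by exact_mod_cast hn : (2:ℝ) ≤ n)
    simpa using this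
  have ht10 : (10:ℝ) ≤ (t:ℝ) := le_trans (by linarith) ht
  have htpos : 1 ≤ t := by exact_mod_cast le_trans (by norm_num : (1:ℝ) ≤ 10) ht10
  -- per-term bound
  have key : ∀ i ∈ Finset.Ico 1 ((n + 1) / 2),
      (n.choose i : ℝ) * (n.choose (i - 1) : ℝ) * (((i : ℝ) - 1) / (n : ℝ)) ^ (i * t)
        ≤ ((n:ℝ) ^ 16)⁻¹ := by
    intro i hi
    rw [Finset.mem_Ico] at hi
    obtain ⟨hi1, hi2⟩ := hi
    have h2i : 2 * i ≤ n := by omega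
    rcases eq_or_lt_of_le hi1 with h1 | h1
    · -- i = 1 : term is 0
      rw [← h1]
      simp only [Nat.cast_one, sub_self, zero_div]
      rw [zero_pow (by omega), mul_zero]
      positivity
    · -- i ≥ 2
      have hi2' : 2 ≤ i := h1
      have hx0 : (0:ℝ) ≤ ((i:ℝ) - 1) / n := by
        apply div_nonneg _ hn0.le
        have : (1:ℝ) ≤ i := by exact_mod_cast hi1
        linarith
      have hxhalf : ((i:ℝ) - 1) / n ≤ 1 / 2 := by
        rw [div_le_div_iff₀ hn0 (by norm_num)]
        have : (2:ℝ) * i ≤ n := by exact_mod_cast h2i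
        linarith
      -- pow bound: ((i-1)/n)^(i*t) ≤ (1/2)^(i*t)
      have hp1 : (((i:ℝ) - 1) / n) ^ (i * t) ≤ ((1:ℝ)/2) ^ (i * t) :=
        pow_le_pow_left₀ hx0 hxhalf _
      -- (1/2)^(i*t) ≤ (n^(10*i))⁻¹
      have hp2 : ((1:ℝ)/2) ^ (i * t) ≤ ((n:ℝ) ^ (10 * i))⁻¹ := by
        rw [one_div, inv_pow]
        apply inv_anti₀ (by positivity)
        -- n^(10*i) ≤ 2^(i*t)
        have hn2 : (n:ℝ) = (2:ℝ) ^ Real.logb 2 (n:ℝ) :=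
          (Real.rpow_logb (by norm_num) (by norm_num) hn0).symm
        calc (n:ℝ) ^ (10 * i)
            = ((2:ℝ) ^ Real.logb 2 (n:ℝ)) ^ (10 * i) := by rw [← hn2]
          _ = (2:ℝ) ^ (Real.logb 2 (n:ℝ) * ((10 * i : ℕ) : ℝ)) := by
              rw [← Real.rpow_natCast ((2:ℝ) ^ Real.logb 2 (n:ℝ)) (10 * i),
                ← Real.rpow_mul (by norm_num)]
          _ ≤ (2:ℝ) ^ (((i * t : ℕ) : ℝ)) := by
              apply Real.rpow_le_rpow_of_exponent_le (by norm_num)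
              push_cast
              have hii : (0:ℝ) ≤ (i:ℝ) := Nat.cast_nonneg i
              nlinarith [mul_le_mul_of_nonneg_left ht hii]
          _ = (2:ℝ) ^ (i * t) := Real.rpow_natCast 2 (i * t)
      -- choose bounds
      have hc1 : (n.choose i : ℝ) ≤ (n:ℝ) ^ i := by
        exact_mod_cast Nat.cast_le.mpr (Nat.choose_le_pow n i)
      have hc2 : (n.choose (i-1) : ℝ) ≤ (n:ℝ) ^ i := by
        calc (n.choose (i-1) : ℝ) ≤ (n:ℝ) ^ (i-1) := by
              exact_mod_cast Nat.cast_le.mpr (Nat.choose_le_pow n (i-1))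
          _ ≤ (n:ℝ) ^ i := pow_le_pow_right₀ hn1 (by omega)
      have hterm : (n.choose i : ℝ) * (n.choose (i - 1) : ℝ) * (((i : ℝ) - 1) / n) ^ (i * t)
          ≤ (n:ℝ) ^ i * (n:ℝ) ^ i * ((n:ℝ) ^ (10 * i))⁻¹ := by
        apply mul_le_mul (mul_le_mul hc1 hc2 (Nat.cast_nonneg _) (by positivity))
          (hp1.trans hp2) (by positivity) (by positivity)
      refine hterm.trans ?_
      rw [← pow_add]
      rw [inv_eq_one_div, inv_eq_one_div, mul_one_div, div_le_div_iff₀ (by positivity) (by positivity),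
        one_mul, ← pow_add]
      exact pow_le_pow_right₀ hn1 (by omega)
  calc ∑ i ∈ Finset.Ico 1 ((n + 1) / 2),
        (n.choose i : ℝ) * (n.choose (i - 1) : ℝ) * (((i : ℝ) - 1) / (n : ℝ)) ^ (i * t)
      ≤ (Finset.Ico 1 ((n + 1) / 2)).card • ((n:ℝ) ^ 16)⁻¹ :=
        Finset.sum_le_card_nsmul _ _ _ key
    _ = ((Finset.Ico 1 ((n + 1) / 2)).card : ℝ) * ((n:ℝ) ^ 16)⁻¹ := by
        rw [nsmul_eq_mul]
    _ ≤ (n:ℝ) * ((n:ℝ) ^ 16)⁻¹ := by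
        apply mul_le_mul_of_nonneg_right _ (by positivity)
        rw [Nat.card_Ico]
        exact_mod_cast Nat.cast_le.mpr (by omega : (n+1)/2 - 1 ≤ n)
    _ ≤ 1 / (n : ℝ) := by
        have h16 : (n:ℝ) ^ 16 = n * n ^ 15 := by ring
        rw [h16, mul_inv, ← mul_assoc, mul_inv_cancel₀ hn0.ne', one_mul, one_div]
        exact inv_anti₀ hn0 (le_self_pow₀ hn1 (by norm_num))
end

section
/- For all sufficiently large natural numbers n and every natural number t with t ≥ 10·log₂ n, ∑_{i=⌈n/2⌉}^{n} (n choose i)·(n choose (i−1))·((i−1)/n)^{i·t} ≤ 1/n, where the sum and all terms are taken over the real numbers. -/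
/-- The "large sets" part of the union bound: for all sufficiently large `n`
and `t ≥ 10·log₂ n`,
`∑_{i=⌈n/2⌉}^{n} (n choose i)(n choose (i−1))((i−1)/n)^{i·t} ≤ 1/n`. -/
theorem hall_union_bound_large_sets :
    ∀ᶠ n : ℕ in Filter.atTop, ∀ t : ℕ, 10 * Real.logb 2 n ≤ (t : ℝ) →
      ∑ i ∈ Finset.Icc ((n + 1) / 2) n,
          (n.choose i : ℝ) * (n.choose (i - 1) : ℝ)
            * (((i : ℝ) - 1) / (n : ℝ)) ^ (i * t)
        ≤ 1 / (n : ℝ) := by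
  filter_upwards [Filter.eventually_ge_atTop 2] with n hn t ht
  have hn0 : (0:ℝ) < n := by positivity
  have hn1 : (1:ℝ) ≤ n := by exact_mod_cast Nat.one_le_of_lt hn
  have hlog0 : 0 ≤ Real.log n := Real.log_nonneg hn1
  -- t ≥ 10 log n
  have hlogb : Real.log n ≤ Real.logb 2 n := by
    rw [Real.logb, le_div_iff₀ (by positivity)]
    nlinarith [Real.log_two_lt_d9, hlog0]
  have ht' : 10 * Real.log n ≤ (t:ℝ) := by linarith
  have hterm : ∀ i ∈ Finset.Icc ((n + 1) / 2) n,
      (n.choose i : ℝ) * (n.choose (i - 1) : ℝ)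
            * (((i : ℝ) - 1) / (n : ℝ)) ^ (i * t) ≤ 1 / (n:ℝ)^4 := by
    intro i hi
    simp only [Finset.mem_Icc] at hi
    obtain ⟨hi1, hi2⟩ := hi
    set j := n - i with hj
    have h1i : 1 ≤ i := by omega
    have hijn : i + j = n := by omega
    have hA : (n.choose i : ℝ) ≤ (n:ℝ)^j := by
      rw [← Nat.choose_symm hi2]
      exact_mod_cast Nat.cast_le.mpr (Nat.choose_le_pow n (n - i))
    have hB : (n.choose (i-1) : ℝ) ≤ (n:ℝ)^(j+1) := by
      have : n - (i-1) = j + 1 := by omega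
      rw [← Nat.choose_symm (by omega : i - 1 ≤ n), this]
      exact_mod_cast Nat.cast_le.mpr (Nat.choose_le_pow n (j+1))
    have hx0 : (0:ℝ) ≤ ((i:ℝ) - 1) / n := by
      apply div_nonneg _ hn0.le
      have : (1:ℝ) ≤ i := by exact_mod_cast h1i
      linarith
    have hxe : ((i:ℝ) - 1) / n ≤ Real.exp (-(((j:ℝ)+1)/n)) := by
      have h1 : ((i:ℝ) - 1) / n = 1 - ((j:ℝ)+1)/n := by
        field_simp
        have : (i:ℝ) + j = n := by exact_mod_cast hijn
        linarith
      have h2 := Real.add_one_le_exp (-(((j:ℝ)+1)/n))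
      linarith [h1, h2]
    have hC : (((i:ℝ) - 1) / n) ^ (i*t) ≤ ((n:ℝ)⁻¹) ^ (5*(j+1)) := by
      calc (((i:ℝ) - 1) / n) ^ (i*t)
          ≤ (Real.exp (-(((j:ℝ)+1)/n))) ^ (i*t) := pow_le_pow_left₀ hx0 hxe _
        _ = Real.exp ((i*t : ℕ) * (-(((j:ℝ)+1)/n))) := (Real.exp_nat_mul _ _).symm
        _ ≤ Real.exp ((5*(j+1) : ℕ) * (-Real.log n)) := by
            rw [Real.exp_le_exp]
            push_cast
            rw [mul_neg, mul_neg, neg_le_neg_iff]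
            -- goal: 5*(j+1) * log n ≤ (i*t) * ((j+1)/n)
            have hitn : 5 * (n:ℝ) * Real.log n ≤ (i:ℝ) * t := by
              have hi' : (n:ℝ)/2 ≤ (i:ℝ) := by
                have : n ≤ 2 * i := by omega
                have := (Nat.cast_le (α := ℝ)).mpr this
                push_cast at this
                linarith
              nlinarith [hlog0, hn0]
            have hjp : (0:ℝ) ≤ (j:ℝ) + 1 := by positivity
            rw [← mul_div_assoc, le_div_iff₀ hn0]
            nlinarith [mul_le_mul_of_nonneg_left hitn hjp]
        _ = ((n:ℝ)⁻¹) ^ (5*(j+1)) := by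
            rw [Real.exp_nat_mul, Real.exp_neg, Real.exp_log hn0]
    calc (n.choose i : ℝ) * (n.choose (i - 1) : ℝ) * (((i : ℝ) - 1) / (n : ℝ)) ^ (i * t)
        ≤ (n:ℝ)^j * (n:ℝ)^(j+1) * ((n:ℝ)⁻¹)^(5*(j+1)) := by
          gcongr <;> positivity
      _ = (n:ℝ)^(j+(j+1)) / (n:ℝ)^(5*(j+1)) := by
          rw [pow_add, inv_pow, div_eq_mul_inv]; ring
      _ ≤ (n:ℝ)^(j+(j+1)) / (n:ℝ)^(j+(j+1)+4) := by
          apply div_le_div_of_nonneg_left (by positivity) (by positivity)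
          exact pow_le_pow_right₀ hn1 (by omega)
      _ = 1 / (n:ℝ)^4 := by
          rw [div_eq_div_iff (by positivity) (by positivity), pow_add, pow_add]; ring
  calc ∑ i ∈ Finset.Icc ((n + 1) / 2) n,
          (n.choose i : ℝ) * (n.choose (i - 1) : ℝ)
            * (((i : ℝ) - 1) / (n : ℝ)) ^ (i * t)
      ≤ (Finset.Icc ((n + 1) / 2) n).card • (1 / (n:ℝ)^4) :=
        Finset.sum_le_card_nsmul _ _ _ hterm
    _ ≤ ((n:ℝ)+1) * (1 / (n:ℝ)^4) := by
        rw [nsmul_eq_mul]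
        apply mul_le_mul_of_nonneg_right _ (by positivity)
        rw [Nat.card_Icc]
        have : n + 1 - (n+1)/2 ≤ n + 1 := by omega
        exact_mod_cast this
    _ ≤ 1 / (n:ℝ) := by
        rw [mul_one_div, div_le_div_iff₀ (by positivity) hn0]
        have h2 : (2:ℝ) ≤ n := by exact_mod_cast hn
        nlinarith [sq_nonneg ((n:ℝ)), mul_le_mul_of_nonneg_left h2 hn0.le, sq_nonneg ((n:ℝ)-1), mul_pos hn0 hn0]
end

section
/- For all sufficiently large natural numbers n, every natural number t with t ≥ 10·log₂ n, and every natural number i with n/2 ≤ i ≤ n − 1, the inequality n² · (i/(i+1))^{(i+1)·t} · (n/i)^{t} < 1 holds over the reals. Consequently, the function f(i) = n^{−2i}·(i/n)^{i·t} is increasing in i on the range n/2 ≤ i ≤ n. -/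
private lemma ratio_aux_core (n t i : ℕ) (hn2 : (2:ℝ) ≤ n)
    (hlog : 2 * Real.log n + (t:ℝ) * (Real.log 2 - 1) < 0)
    (ht0 : t ≠ 0)
    (hi1 : (n : ℝ) / 2 ≤ (i : ℝ)) (hi2 : i ≤ n - 1) :
    (n : ℝ) ^ 2 * ((i : ℝ) / ((i : ℝ) + 1)) ^ ((i + 1) * t)
        * ((n : ℝ) / (i : ℝ)) ^ t < 1 := by
  have hn0 : (0:ℝ) < n := by linarith
  have hi0 : (0:ℝ) < i := by linarith
  have hi1' : (0:ℝ) < (i:ℝ) + 1 := by linarith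
  -- step 1 : (i/(i+1)) < exp(-(1/(i+1)))
  have h1 : (i:ℝ) / ((i:ℝ)+1) < Real.exp (-(1/((i:ℝ)+1))) := by
    have h := Real.add_one_lt_exp (x := -(1/((i:ℝ)+1))) (neg_ne_zero.mpr (by positivity))
    have heq : (i:ℝ) / ((i:ℝ)+1) = -(1/((i:ℝ)+1)) + 1 := by field_simp; ring
    rw [heq]; exact h
  -- step 2 : (i/(i+1))^(i+1) < exp (-1)
  have h2 : ((i:ℝ) / ((i:ℝ)+1)) ^ (i+1) < Real.exp (-1) := by
    have := pow_lt_pow_left₀ h1 (by positivity) (Nat.succ_ne_zero i)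
    calc ((i:ℝ) / ((i:ℝ)+1)) ^ (i+1) < (Real.exp (-(1/((i:ℝ)+1)))) ^ (i+1) := this
      _ = Real.exp (-1) := by
            rw [← Real.exp_nat_mul]; congr 1; push_cast; field_simp
  -- step 3 : (i/(i+1))^((i+1)*t) < exp(-1)^t
  have h3 : ((i:ℝ) / ((i:ℝ)+1)) ^ ((i+1)*t) < (Real.exp (-1)) ^ t := by
    rw [pow_mul]
    exact pow_lt_pow_left₀ h2 (by positivity) ht0
  -- step 4 : (n/i)^t ≤ 2^t
  have h4 : ((n:ℝ)/(i:ℝ)) ^ t ≤ (2:ℝ) ^ t := by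
    apply pow_le_pow_left₀ (by positivity)
    rw [div_le_iff₀ hi0]; linarith
  -- step 5 : n^2 * exp(-1)^t * 2^t < 1
  have h5 : (n:ℝ)^2 * (Real.exp (-1)) ^ t * (2:ℝ) ^ t < 1 := by
    have hpos : (0:ℝ) < (n:ℝ)^2 * (Real.exp (-1)) ^ t * (2:ℝ) ^ t := by positivity
    refine (Real.log_neg_iff hpos).mp ?_
    rw [Real.log_mul (by positivity) (by positivity),
        Real.log_mul (by positivity) (by positivity),
        Real.log_pow, Real.log_pow, Real.log_pow, Real.log_exp]
    push_cast
    linarith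
  -- combine
  have hX : (0:ℝ) < ((i:ℝ) / ((i:ℝ)+1)) ^ ((i+1)*t) := by positivity
  calc (n : ℝ) ^ 2 * ((i : ℝ) / ((i : ℝ) + 1)) ^ ((i + 1) * t) * ((n : ℝ) / (i : ℝ)) ^ t
      ≤ (n : ℝ) ^ 2 * ((i : ℝ) / ((i : ℝ) + 1)) ^ ((i + 1) * t) * (2:ℝ) ^ t := by
        apply mul_le_mul_of_nonneg_left h4 (by positivity)
    _ < (n:ℝ)^2 * (Real.exp (-1)) ^ t * (2:ℝ) ^ t := by
        apply mul_lt_mul_of_pos_right _ (by positivity)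
        exact mul_lt_mul_of_pos_left h3 (by positivity)
    _ < 1 := h5

private lemma ratio_step (n t k : ℕ) (hn2 : (2:ℝ) ≤ n)
    (hlog : 2 * Real.log n + (t:ℝ) * (Real.log 2 - 1) < 0)
    (ht0 : t ≠ 0)
    (hk1 : (n : ℝ) / 2 ≤ (k : ℝ)) (hk2 : k ≤ n - 1) :
    (n : ℝ) ^ (-(2 * (k : ℝ))) * ((k : ℝ) / (n : ℝ)) ^ (k * t)
      < (n : ℝ) ^ (-(2 * ((k+1 : ℕ) : ℝ))) * (((k+1:ℕ) : ℝ) / (n : ℝ)) ^ ((k+1) * t) := by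
  have hn0 : (0:ℝ) < n := by linarith
  have hk0 : (0:ℝ) < k := by linarith
  have hC := ratio_aux_core n t k hn2 hlog ht0 hk1 hk2
  -- rewrite rpow as inverse of nat pow
  have hr : ∀ m : ℕ, (n : ℝ) ^ (-(2 * (m : ℝ))) = ((n:ℝ) ^ (2*m))⁻¹ := by
    intro m
    rw [show (2 * (m:ℝ)) = ((2*m : ℕ) : ℝ) by push_cast; ring,
        Real.rpow_neg hn0.le, Real.rpow_natCast]
  rw [hr, hr]
  have hRpos : (0:ℝ) < ((n:ℝ) ^ (2*(k+1)))⁻¹ * (((k+1:ℕ):ℝ)/(n:ℝ)) ^ ((k+1)*t) := by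
    positivity
  have hident : ((n:ℝ) ^ (2*k))⁻¹ * ((k:ℝ)/(n:ℝ)) ^ (k*t)
      = ((n : ℝ) ^ 2 * ((k : ℝ) / ((k : ℝ) + 1)) ^ ((k + 1) * t) * ((n : ℝ) / (k : ℝ)) ^ t)
        * (((n:ℝ) ^ (2*(k+1)))⁻¹ * (((k+1:ℕ):ℝ)/(n:ℝ)) ^ ((k+1)*t)) := by
    have hk0' : (k:ℝ) ≠ 0 := ne_of_gt hk0
    have hn0' : (n:ℝ) ≠ 0 := ne_of_gt hn0
    have hk1' : ((k:ℝ)+1) ≠ 0 := by positivity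
    push_cast
    rw [div_pow, div_pow, div_pow, div_pow]
    field_simp
    ring
  rw [hident]
  calc (_ * _) < 1 * (((n:ℝ) ^ (2*(k+1)))⁻¹ * (((k+1:ℕ):ℝ)/(n:ℝ)) ^ ((k+1)*t)) :=
        mul_lt_mul_of_pos_right hC hRpos
    _ = _ := one_mul _

/-- For all sufficiently large `n`, all `t ≥ 10·log₂ n`, and all
`n/2 ≤ i ≤ n − 1`, we have `n²·(i/(i+1))^{(i+1)t}·(n/i)^t < 1`;
consequently `f(i) = n^{−2i}·(i/n)^{i·t}` is (strictly) increasing on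
`n/2 ≤ i ≤ n`. -/
theorem ratio_lt_one_and_f_increasing :
    ∀ᶠ n : ℕ in Filter.atTop, ∀ t : ℕ, 10 * Real.logb 2 n ≤ (t : ℝ) →
      (∀ i : ℕ, (n : ℝ) / 2 ≤ (i : ℝ) → i ≤ n - 1 →
        (n : ℝ) ^ 2 * ((i : ℝ) / ((i : ℝ) + 1)) ^ ((i + 1) * t)
            * ((n : ℝ) / (i : ℝ)) ^ t < 1) ∧
      (∀ i j : ℕ, (n : ℝ) / 2 ≤ (i : ℝ) → i < j → j ≤ n →
        (n : ℝ) ^ (-(2 * (i : ℝ))) * ((i : ℝ) / (n : ℝ)) ^ (i * t)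
          < (n : ℝ) ^ (-(2 * (j : ℝ))) * ((j : ℝ) / (n : ℝ)) ^ (j * t)) := by
  filter_upwards [Filter.eventually_ge_atTop 2] with n hn
  intro t ht
  have hn2 : (2:ℝ) ≤ n := by exact_mod_cast hn
  have hlog2pos : (0:ℝ) < Real.log 2 := Real.log_pos (by norm_num)
  have hlogn : Real.log 2 ≤ Real.log n := Real.log_le_log (by norm_num) hn2
  have hlognpos : 0 < Real.log n := Real.log_pos (by linarith)
  have hlb : (1:ℝ) ≤ Real.logb 2 n := by
    rw [Real.logb]
    exact (one_le_div hlog2pos).mpr hlogn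
  have ht10 : (10:ℝ) ≤ (t:ℝ) := by
    have := ht
    rw [Real.logb] at this
    nlinarith
  have ht0 : t ≠ 0 := by
    intro h; rw [h] at ht10; norm_num at ht10
  have hlog : 2 * Real.log n + (t:ℝ) * (Real.log 2 - 1) < 0 := by
    rw [Real.logb] at ht
    have hL2lt : Real.log 2 < 0.6931471808 := Real.log_two_lt_d9
    have hL2gt : (0.6931471803 : ℝ) < Real.log 2 := Real.log_two_gt_d9
    -- t * (1 - log 2) ≥ (10 * log n / log 2) * (1 - log 2) > 2 * log n
    have h1 : (10 * (Real.log n / Real.log 2)) * (1 - Real.log 2)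
        ≤ (t:ℝ) * (1 - Real.log 2) :=
      mul_le_mul_of_nonneg_right ht (by linarith)
    have h2 : 2 * Real.log n < (10 * (Real.log n / Real.log 2)) * (1 - Real.log 2) := by
      rw [mul_div_assoc', div_mul_eq_mul_div, lt_div_iff₀ hlog2pos]
      nlinarith
    linarith
  constructor
  · intro i hi1 hi2
    exact ratio_aux_core n t i hn2 hlog ht0 hi1 hi2
  · intro i j hi hij hjn
    induction j with
    | zero => omega
    | succ m ih =>
      have hmn : m ≤ n - 1 := by omega
      rcases Nat.lt_or_ge i m with h | h
      · have hstep : (n : ℝ) ^ (-(2 * (m : ℝ))) * ((m : ℝ) / (n : ℝ)) ^ (m * t)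
            < (n : ℝ) ^ (-(2 * ((m+1:ℕ) : ℝ))) * (((m+1:ℕ) : ℝ) / (n : ℝ)) ^ ((m+1) * t) := by
          apply ratio_step n t m hn2 hlog ht0 _ hmn
          have : (i:ℝ) ≤ (m:ℝ) := by exact_mod_cast Nat.le_of_lt h
          linarith
        exact lt_trans (ih h (by omega)) hstep
      · have him : i = m := by omega
        subst him
        exact ratio_step n t i hn2 hlog ht0 hi (by omega)
end

section
/- For all sufficiently large natural numbers n the following holds with t = ⌈10·log₂ n⌉. For each i ∈ {1,…,n} sample t indices p_{i,1},…,p_{i,t} ∈ {1,…,n} independently and uniformly at random (all n·t samples independent). Then with probability at least 1 − 2/n there exists a permutation σ of {1,…,n} such that σ(i) ∈ {p_{i,1},…,p_{i,t}} for every i; that is, the random bipartite graph in which the left vertex i is joined to the right vertices p_{i,1},…,p_{i,t} contains a perfect matching. -/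
open Finset Real

-- Hall reformulation
lemma matching_iff_hall {n t : ℕ} (ω : Fin n → Fin t → Fin n) :
    (∃ σ : Equiv.Perm (Fin n), ∀ i, ∃ j, ω i j = σ i) ↔
    ∀ S : Finset (Fin n), S.card ≤ (S.biUnion fun i => image (ω i) univ).card := by
  constructor
  · rintro ⟨σ, hσ⟩ S
    have h : S.image σ ⊆ S.biUnion fun i => image (ω i) univ := by
      intro x hx
      simp only [mem_image] at hx
      obtain ⟨i, hi, rfl⟩ := hx
      obtain ⟨j, hj⟩ := hσ i
      exact mem_biUnion.2 ⟨i, hi, mem_image.2 ⟨j, mem_univ _, hj⟩⟩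
    calc S.card = (S.image σ).card := (card_image_of_injective _ σ.injective).symm
    _ ≤ _ := card_le_card h
  · intro h
    obtain ⟨f, hf, hmem⟩ := (Finset.all_card_le_biUnion_card_iff_exists_injective
      (fun i => image (ω i) univ)).1 h
    refine ⟨Equiv.ofBijective f (Finite.injective_iff_bijective.1 hf), fun i => ?_⟩
    obtain ⟨j, _, hj⟩ := mem_image.1 (hmem i)
    exact ⟨j, hj⟩

lemma count_constrained {n t : ℕ} (S T : Finset (Fin n)) :
    (univ.filter (fun ω : Fin n → Fin t → Fin n => ∀ i ∈ S, ∀ j, ω i j ∈ T)).card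
      = T.card ^ (S.card * t) * n ^ ((n - S.card) * t) := by
  classical
  set C : Fin n → Finset (Fin n) := fun i => if i ∈ S then T else univ with hC
  have hiff : ∀ ω : Fin n → Fin t → Fin n,
      (∀ i ∈ S, ∀ j, ω i j ∈ T) ↔ ∀ i, ∀ j : Fin t, ω i j ∈ C i := by
    intro ω
    constructor
    · intro h i j
      by_cases hi : i ∈ S
      · simp only [hC, if_pos hi]; exact h i hi j
      · rw [hC]; simp only [if_neg hi, mem_univ]
    · intro h i hi j
      have := h i j
      simpa [hC, hi] using this
  have : (univ.filter (fun ω : Fin n → Fin t → Fin n => ∀ i ∈ S, ∀ j, ω i j ∈ T)).card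
      = Fintype.card {ω : Fin n → Fin t → Fin n // ∀ i, ∀ j : Fin t, ω i j ∈ C i} := by
    rw [Fintype.card_subtype]
    congr 1
    apply filter_congr
    intro ω _
    exact hiff ω
  rw [this]
  have e : {ω : Fin n → Fin t → Fin n // ∀ i, ∀ j : Fin t, ω i j ∈ C i}
      ≃ ∀ i : Fin n, Fin t → {x // x ∈ C i} :=
    (Equiv.subtypePiEquivPi (p := fun i (g : Fin t → Fin n) => ∀ j, g j ∈ C i)).trans
      (Equiv.piCongrRight fun i => Equiv.subtypePiEquivPi (p := fun _ x => x ∈ C i))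
  rw [Fintype.card_congr e, Fintype.card_pi]
  have hcard : ∀ i : Fin n, Fintype.card (Fin t → {x // x ∈ C i}) = (C i).card ^ t := by
    intro i
    rw [Fintype.card_fun, Fintype.card_coe, Fintype.card_fin]
  simp only [hcard]
  rw [← prod_mul_prod_compl S]
  have h1 : ∏ i ∈ S, (C i).card ^ t = T.card ^ (S.card * t) := by
    have : ∀ i ∈ S, (C i).card ^ t = T.card ^ t := fun i hi => by rw [hC]; simp [hi]
    rw [prod_congr rfl this, prod_const, ← pow_mul, Nat.mul_comm]
  have h2 : ∏ i ∈ Sᶜ, (C i).card ^ t = n ^ ((n - S.card) * t) := by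
    have : ∀ i ∈ Sᶜ, (C i).card ^ t = n ^ t := by
      intro i hi
      rw [hC]; simp [mem_compl.1 hi]
    rw [prod_congr rfl this, prod_const, ← pow_mul, card_compl, Fintype.card_fin, Nat.mul_comm]
  rw [h1, h2]

lemma bad_card_le {n t : ℕ} :
    (univ.filter (fun ω : Fin n → Fin t → Fin n =>
        ¬ ∃ σ : Equiv.Perm (Fin n), ∀ i, ∃ j, ω i j = σ i)).card
      ≤ ∑ k ∈ Icc 1 n, n.choose k * n.choose (k-1) * (k-1) ^ (k*t) * n ^ ((n-k)*t) := by
  classical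
  set E : Finset (Fin n) → Finset (Fin n) → Finset (Fin n → Fin t → Fin n) :=
    fun S T => univ.filter (fun ω => ∀ i ∈ S, ∀ j, ω i j ∈ T) with hE
  have hsub : (univ.filter (fun ω : Fin n → Fin t → Fin n =>
        ¬ ∃ σ : Equiv.Perm (Fin n), ∀ i, ∃ j, ω i j = σ i))
      ⊆ (Icc 1 n).biUnion (fun k =>
          (powersetCard k (univ : Finset (Fin n))).biUnion (fun S =>
            (powersetCard (k-1) (univ : Finset (Fin n))).biUnion (fun T => E S T))) := by
    intro ω hω
    rw [mem_filter] at hω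
    have hbad := hω.2
    rw [matching_iff_hall] at hbad
    push_neg at hbad
    obtain ⟨S, hS⟩ := hbad
    set k := S.card with hk
    have hk1 : 1 ≤ k := by omega
    have hkn : k ≤ n := by
      simpa using (card_le_card (subset_univ S)).trans_eq (by simp)
    have hNle : (S.biUnion fun i => image (ω i) univ).card ≤ k - 1 := by omega
    obtain ⟨T, hsubT, _, hTcard⟩ := exists_subsuperset_card_eq
      (subset_univ (S.biUnion fun i => image (ω i) univ)) hNle (by simp; omega)
    refine mem_biUnion.2 ⟨k, mem_Icc.2 ⟨hk1, hkn⟩, mem_biUnion.2 ⟨S, ?_, mem_biUnion.2 ⟨T, ?_, ?_⟩⟩⟩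
    · exact mem_powersetCard.2 ⟨subset_univ _, rfl⟩
    · exact mem_powersetCard.2 ⟨subset_univ _, hTcard⟩
    · rw [hE, mem_filter]
      refine ⟨mem_univ _, fun i hi j => ?_⟩
      exact hsubT (mem_biUnion.2 ⟨i, hi, mem_image.2 ⟨j, mem_univ _, rfl⟩⟩)
  calc _ ≤ _ := card_le_card hsub
    _ ≤ ∑ k ∈ Icc 1 n, ((powersetCard k (univ : Finset (Fin n))).biUnion (fun S =>
            (powersetCard (k-1) (univ : Finset (Fin n))).biUnion (fun T => E S T))).card :=
        card_biUnion_le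
    _ ≤ _ := by
        apply sum_le_sum
        intro k hk
        rw [mem_Icc] at hk
        calc _ ≤ ∑ S ∈ powersetCard k (univ : Finset (Fin n)),
              ((powersetCard (k-1) (univ : Finset (Fin n))).biUnion (fun T => E S T)).card :=
            card_biUnion_le
          _ ≤ ∑ S ∈ powersetCard k (univ : Finset (Fin n)),
              ∑ T ∈ powersetCard (k-1) (univ : Finset (Fin n)), (E S T).card :=
            sum_le_sum fun S _ => card_biUnion_le
          _ = n.choose k * n.choose (k-1) * (k-1) ^ (k*t) * n ^ ((n-k)*t) := by
            have hET : ∀ S ∈ powersetCard k (univ : Finset (Fin n)),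
                ∀ T ∈ powersetCard (k-1) (univ : Finset (Fin n)),
                (E S T).card = (k-1) ^ (k*t) * n ^ ((n-k)*t) := by
              intro S hS T hT
              rw [mem_powersetCard] at hS hT
              rw [hE, count_constrained, hS.2, hT.2]
            rw [sum_congr rfl fun S hS => sum_congr rfl (hET S hS)]
            simp only [sum_const, smul_eq_mul, card_powersetCard, card_univ, Fintype.card_fin]
            ring

lemma two_pow_t {n t : ℕ} (hn : 2 ≤ n) (ht : t = ⌈10 * Real.logb 2 n⌉₊) :
    (n:ℝ)^(10:ℕ) ≤ (2:ℝ)^t := by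
  have hn0 : (0:ℝ) < n := by positivity
  have h1 : (10 * Real.logb 2 n) ≤ (t:ℝ) := ht ▸ Nat.le_ceil _
  have h2 : (2:ℝ)^(10 * Real.logb 2 n) ≤ (2:ℝ)^((t:ℝ)) :=
    Real.rpow_le_rpow_left_iff (by norm_num) |>.2 h1
  calc (n:ℝ)^(10:ℕ) = ((2:ℝ) ^ Real.logb 2 n) ^ (10:ℕ) := by
        rw [Real.rpow_logb (by norm_num) (by norm_num) hn0]
    _ = (2:ℝ)^(10 * Real.logb 2 n) := by
        rw [← Real.rpow_natCast ((2:ℝ) ^ Real.logb 2 n) 10, ← Real.rpow_mul (by norm_num)]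
        norm_num [mul_comm]
    _ ≤ (2:ℝ)^((t:ℝ)) := h2
    _ = (2:ℝ)^t := by rw [Real.rpow_natCast]

lemma t_ge {n t : ℕ} (hn : 2 ≤ n) (ht : t = ⌈10 * Real.logb 2 n⌉₊) :
    14 * Real.log n ≤ (t:ℝ) := by
  have h1 : (10 * Real.logb 2 n) ≤ (t:ℝ) := ht ▸ Nat.le_ceil _
  have hlogn : 0 ≤ Real.log n := Real.log_nonneg (by exact_mod_cast Nat.one_le_of_lt hn)
  have hlog2 : Real.log 2 < 0.6931471808 := Real.log_two_lt_d9
  have hlog2pos : 0 < Real.log 2 := Real.log_pos (by norm_num)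
  have : 14 * Real.log n ≤ 10 * (Real.log n / Real.log 2) := by
    rw [mul_div_assoc', le_div_iff₀ hlog2pos]
    nlinarith
  calc 14 * Real.log n ≤ 10 * Real.logb 2 n := by rw [Real.logb]; exact this
    _ ≤ (t:ℝ) := h1

lemma term_bound {n t k : ℕ} (hn : 2 ≤ n) (ht : t = ⌈10 * Real.logb 2 n⌉₊)
    (hk1 : 1 ≤ k) (hkn : k ≤ n) :
    (n.choose k : ℝ) * n.choose (k-1) * ((k-1 : ℕ):ℝ)^(k*t) * (n:ℝ)^(5:ℕ)
      ≤ (n:ℝ)^(k*t) := by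
  have hn0 : (0:ℝ) < n := by positivity
  have hn1 : (1:ℝ) ≤ n := by exact_mod_cast Nat.one_le_of_lt hn
  by_cases hcase : 2 * (k-1) ≤ n
  · -- small k
    have hc1 : (n.choose k : ℝ) ≤ (n:ℝ)^k := by
      exact_mod_cast Nat.cast_le.2 (Nat.choose_le_pow n k)
    have hc2 : (n.choose (k-1) : ℝ) ≤ (n:ℝ)^k := by
      calc (n.choose (k-1) : ℝ) ≤ (n:ℝ)^(k-1) := by
            exact_mod_cast Nat.cast_le.2 (Nat.choose_le_pow n (k-1))
        _ ≤ (n:ℝ)^k := pow_le_pow_right₀ hn1 (Nat.sub_le k 1)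
    have hb : ((k-1:ℕ):ℝ)^(k*t) ≤ ((n:ℝ)/2)^(k*t) := by
      apply pow_le_pow_left₀ (by positivity)
      rw [le_div_iff₀ (by norm_num : (0:ℝ) < 2)]
      exact_mod_cast (by omega : (k-1) * 2 ≤ n)
    have h2t : (n:ℝ)^(2*k+5) ≤ (2:ℝ)^(k*t) := by
      calc (n:ℝ)^(2*k+5) ≤ (n:ℝ)^(10*k) := pow_le_pow_right₀ hn1 (by omega)
        _ = ((n:ℝ)^(10:ℕ))^k := by rw [← pow_mul]
        _ ≤ ((2:ℝ)^t)^k := pow_le_pow_left₀ (by positivity) (two_pow_t hn ht) k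
        _ = (2:ℝ)^(k*t) := by rw [← pow_mul, Nat.mul_comm]
    calc (n.choose k : ℝ) * n.choose (k-1) * ((k-1 : ℕ):ℝ)^(k*t) * (n:ℝ)^(5:ℕ)
        ≤ (n:ℝ)^k * (n:ℝ)^k * ((n:ℝ)/2)^(k*t) * (n:ℝ)^(5:ℕ) := by
          gcongr <;> positivity
      _ = (n:ℝ)^(2*k+5) * ((n:ℝ)^(k*t)/(2:ℝ)^(k*t)) := by
          rw [div_pow]; ring
      _ ≤ (2:ℝ)^(k*t) * ((n:ℝ)^(k*t)/(2:ℝ)^(k*t)) := by gcongr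
      _ = (n:ℝ)^(k*t) := by field_simp
  · -- large k
    push_neg at hcase
    set m := n - k with hm
    have hm1 : m + 1 ≤ n := by omega
    have hc1 : (n.choose k : ℝ) ≤ (n:ℝ)^m := by
      rw [← Nat.choose_symm hkn]
      exact_mod_cast Nat.cast_le.2 (Nat.choose_le_pow n m)
    have hc2 : (n.choose (k-1) : ℝ) ≤ (n:ℝ)^(m+1) := by
      have : n - (k-1) = m + 1 := by omega
      rw [← Nat.choose_symm (by omega : k - 1 ≤ n), this]
      exact_mod_cast Nat.cast_le.2 (Nat.choose_le_pow n (m+1))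
    have hkey : ((k-1:ℕ):ℝ) = (n:ℝ) - (m+1) := by
      have : (k - 1 : ℕ) = n - (m+1) := by omega
      rw [this, Nat.cast_sub hm1]; push_cast; ring
    have hexp1 : ((k-1:ℕ):ℝ)^(k*t) ≤ ((n:ℝ) * Real.exp (-((m:ℝ)+1)/n))^(k*t) := by
      apply pow_le_pow_left₀ (by rw [hkey]; push_cast; exact_mod_cast (by
        have : ((m:ℝ)+1) ≤ (n:ℝ) := by exact_mod_cast hm1
        linarith))
      rw [hkey]
      have h1 : 1 - ((m:ℝ)+1)/n ≤ Real.exp (-(((m:ℝ)+1)/n)) := by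
        have := Real.add_one_le_exp (-(((m:ℝ)+1)/n))
        linarith
      calc (n:ℝ) - ((m:ℝ)+1) = (n:ℝ) * (1 - ((m:ℝ)+1)/n) := by field_simp
        _ ≤ (n:ℝ) * Real.exp (-(((m:ℝ)+1)/n)) := by
            apply mul_le_mul_of_nonneg_left h1 (le_of_lt hn0)
        _ = (n:ℝ) * Real.exp (-((m:ℝ)+1)/n) := by rw [neg_div]
    have hexpand : ((n:ℝ) * Real.exp (-((m:ℝ)+1)/n))^(k*t)
        = (n:ℝ)^(k*t) * Real.exp ((k*t : ℕ) * (-((m:ℝ)+1)/n)) := by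
      rw [mul_pow, Real.exp_nat_mul]
    -- key exponent inequality
    have hkn2 : (n:ℝ) ≤ 2 * k := by
      exact_mod_cast (by omega : n ≤ 2 * k)
    have hlogn : 0 ≤ Real.log n := Real.log_nonneg hn1
    have htge : 14 * Real.log n ≤ (t:ℝ) := t_ge hn ht
    have hfinal : (n:ℝ)^(2*m+6) ≤ Real.exp (((k*t:ℕ):ℝ) * (((m:ℝ)+1)/n)) := by
      have e1 : (n:ℝ)^(2*m+6) = Real.exp (((2*m+6 : ℕ):ℝ) * Real.log n) := by
        rw [Real.exp_nat_mul, Real.exp_log hn0]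
      rw [e1]
      apply Real.exp_le_exp.2
      have h7 : ((2*m+6 : ℕ):ℝ) * Real.log n ≤ (((m:ℝ)+1) * 7) * Real.log n := by
        apply mul_le_mul_of_nonneg_right _ hlogn
        push_cast; linarith
      have hts : (((m:ℝ)+1) * 7) * Real.log n ≤ ((m:ℝ)+1) * ((t:ℝ)/2) := by
        rw [mul_assoc]
        apply mul_le_mul_of_nonneg_left _ (by positivity)
        linarith
      have hlast : ((m:ℝ)+1) * ((t:ℝ)/2) ≤ ((k*t:ℕ):ℝ) * (((m:ℝ)+1)/n) := by
        push_cast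
        have e2 : ((m:ℝ)+1) * ((t:ℝ)/2) = (((m:ℝ)+1)*t)/2 := by ring
        have e3 : (k:ℝ)*t*(((m:ℝ)+1)/n) = ((k:ℝ)*t*((m:ℝ)+1))/n := by ring
        rw [e2, e3, div_le_div_iff₀ (by norm_num) hn0]
        have ht0 : (0:ℝ) ≤ (t:ℝ) := by positivity
        have hm0 : (0:ℝ) ≤ (m:ℝ)+1 := by positivity
        nlinarith [mul_le_mul_of_nonneg_left hkn2 (mul_nonneg hm0 ht0)]
      linarith
    -- combine
    calc (n.choose k : ℝ) * n.choose (k-1) * ((k-1 : ℕ):ℝ)^(k*t) * (n:ℝ)^(5:ℕ)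
        ≤ (n:ℝ)^m * (n:ℝ)^(m+1) * ((n:ℝ)^(k*t) * Real.exp ((k*t : ℕ) * (-((m:ℝ)+1)/n))) * (n:ℝ)^(5:ℕ) := by
          rw [← hexpand]
          gcongr <;> positivity
      _ = (n:ℝ)^(2*m+6) * Real.exp ((k*t : ℕ) * (-((m:ℝ)+1)/n)) * (n:ℝ)^(k*t) := by
          rw [show 2*m+6 = m + (m+1) + 5 by ring, pow_add, pow_add]; ring
      _ ≤ Real.exp (((k*t:ℕ):ℝ) * (((m:ℝ)+1)/n)) * Real.exp ((k*t : ℕ) * (-((m:ℝ)+1)/n)) * (n:ℝ)^(k*t) := by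
          gcongr
      _ = (n:ℝ)^(k*t) := by
          rw [← Real.exp_add,
            show ((k*t:ℕ):ℝ) * (((m:ℝ)+1)/n) + ((k*t:ℕ):ℝ) * (-((m:ℝ)+1)/n) = 0 by ring,
            Real.exp_zero, one_mul]

/-- **Random sparse bipartite graphs have perfect matchings whp.**
For all sufficiently large `n`, with `t = ⌈10·log₂ n⌉`, if each left vertex
`i ∈ {1,…,n}` independently samples `t` uniform right neighbours
`p_{i,1},…,p_{i,t}`, then with probability at least `1 − 2/n` there is a
permutation `σ` with `σ(i)` among the samples of `i` for every `i`.
Probability is measured by counting sample points `ω : Fin n → Fin t → Fin n`. -/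
theorem random_bipartite_graph_has_perfect_matching :
    ∀ᶠ n : ℕ in Filter.atTop, ∀ t : ℕ, t = ⌈10 * Real.logb 2 n⌉₊ →
      (1 - 2 / (n : ℝ)) * (Fintype.card (Fin n → Fin t → Fin n) : ℝ)
        ≤ ((Finset.univ.filter (fun ω : Fin n → Fin t → Fin n =>
              ∃ σ : Equiv.Perm (Fin n), ∀ i : Fin n, ∃ j : Fin t, ω i j = σ i)).card : ℝ) := by
  filter_upwards [Filter.eventually_ge_atTop 2] with n hn t ht
  classical
  have hn0 : (0:ℝ) < n := by positivity
  set P : (Fin n → Fin t → Fin n) → Prop :=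
    fun ω => ∃ σ : Equiv.Perm (Fin n), ∀ i : Fin n, ∃ j : Fin t, ω i j = σ i with hP
  have hsplit : (univ.filter P).card + (univ.filter (fun ω => ¬ P ω)).card
      = Fintype.card (Fin n → Fin t → Fin n) := by
    rw [Finset.card_filter_add_card_filter_not, card_univ]
  have hcard : (Fintype.card (Fin n → Fin t → Fin n) : ℝ) = (n:ℝ)^(n*t) := by
    rw [Fintype.card_fun, Fintype.card_fun, Fintype.card_fin, Fintype.card_fin]
    push_cast
    rw [← pow_mul, Nat.mul_comm]
  -- bound the bad set
  have hbad : ((univ.filter (fun ω => ¬ P ω)).card : ℝ)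
      ≤ 2 / (n:ℝ) * (Fintype.card (Fin n → Fin t → Fin n) : ℝ) := by
    have h1 : ((univ.filter (fun ω => ¬ P ω)).card : ℝ)
        ≤ ∑ k ∈ Icc 1 n,
          ((n.choose k : ℝ) * n.choose (k-1) * ((k-1:ℕ):ℝ) ^ (k*t) * (n:ℝ) ^ ((n-k)*t)) := by
      have := bad_card_le (n := n) (t := t)
      calc ((univ.filter (fun ω => ¬ P ω)).card : ℝ)
          ≤ ((∑ k ∈ Icc 1 n, n.choose k * n.choose (k-1) * (k-1) ^ (k*t) * n ^ ((n-k)*t) : ℕ) : ℝ) := by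
            exact_mod_cast this
        _ = _ := by
            push_cast
            exact sum_congr rfl fun x _ => rfl
    have h2 : ∀ k ∈ Icc 1 n,
        (n.choose k : ℝ) * n.choose (k-1) * ((k-1:ℕ):ℝ) ^ (k*t) * (n:ℝ) ^ ((n-k)*t)
          ≤ (n:ℝ)^(n*t) / (n:ℝ)^(5:ℕ) := by
      intro k hk
      rw [mem_Icc] at hk
      have htb := term_bound hn ht hk.1 hk.2
      have hsplitpow : (n:ℝ)^(n*t) = (n:ℝ)^(k*t) * (n:ℝ)^((n-k)*t) := by
        rw [← pow_add]
        congr 1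
        have : k*t + (n-k)*t = n*t := by
          rw [← Nat.add_mul]; congr 1; omega
        omega
      rw [hsplitpow, le_div_iff₀ (by positivity)]
      calc (n.choose k : ℝ) * n.choose (k-1) * ((k-1:ℕ):ℝ) ^ (k*t) * (n:ℝ) ^ ((n-k)*t) * (n:ℝ)^(5:ℕ)
          = ((n.choose k : ℝ) * n.choose (k-1) * ((k-1:ℕ):ℝ) ^ (k*t) * (n:ℝ)^(5:ℕ)) * (n:ℝ) ^ ((n-k)*t) := by ring
        _ ≤ (n:ℝ)^(k*t) * (n:ℝ) ^ ((n-k)*t) := by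
            apply mul_le_mul_of_nonneg_right htb (by positivity)
    have h3 : ((univ.filter (fun ω => ¬ P ω)).card : ℝ)
        ≤ (n:ℝ) * ((n:ℝ)^(n*t) / (n:ℝ)^(5:ℕ)) := by
      calc _ ≤ _ := h1
        _ ≤ ∑ _k ∈ Icc 1 n, (n:ℝ)^(n*t) / (n:ℝ)^(5:ℕ) := sum_le_sum h2
        _ = (n:ℝ) * ((n:ℝ)^(n*t) / (n:ℝ)^(5:ℕ)) := by
            rw [sum_const, Nat.card_Icc]
            simp [nsmul_eq_mul]
    calc ((univ.filter (fun ω => ¬ P ω)).card : ℝ) ≤ (n:ℝ) * ((n:ℝ)^(n*t) / (n:ℝ)^(5:ℕ)) := h3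
      _ ≤ 2 / (n:ℝ) * (n:ℝ)^(n*t) := by
          have hn1 : (1:ℝ) ≤ n := by exact_mod_cast Nat.one_le_of_lt hn
          rw [mul_div_assoc', div_mul_eq_mul_div, div_le_div_iff₀ (by positivity) hn0]
          have h25 : (n:ℝ)^(2:ℕ) ≤ (n:ℝ)^(5:ℕ) := pow_le_pow_right₀ hn1 (by norm_num)
          have h6 : (n:ℝ)*(n:ℝ) ≤ 2*(n:ℝ)^(5:ℕ) := by nlinarith [h25, pow_nonneg hn0.le 5]
          nlinarith [mul_le_mul_of_nonneg_right h6 (le_of_lt (pow_pos hn0 (n*t)))]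
      _ = 2 / (n:ℝ) * (Fintype.card (Fin n → Fin t → Fin n) : ℝ) := by rw [hcard]
  -- conclude
  have hG : ((univ.filter P).card : ℝ)
      = (Fintype.card (Fin n → Fin t → Fin n) : ℝ) - ((univ.filter (fun ω => ¬ P ω)).card : ℝ) := by
    have := hsplit
    push_cast [← this]
    ring
  rw [hG] at *
  nlinarith [hbad, hn0]
end

section
/- Consider the same random bipartite graph model: for each i ∈ {1,…,n}, t indices p_{i,1},…,p_{i,t} ∈ {1,…,n} are sampled independently and uniformly at random, and left vertex i is joined to right vertices p_{i,1},…,p_{i,t}. Then the probability that this graph has no perfect matching (i.e., no permutation σ of {1,…,n} with σ(i) ∈ {p_{i,1},…,p_{i,t}} for all i) is at most ∑_{i=1}^{n} (n choose i)·(n choose (i−1))·((i−1)/n)^{i·t}. -/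
open Finset

lemma card_filter_pi {α β : Type*} [Fintype α] [DecidableEq α] [Fintype β] [DecidableEq β]
    (A : α → Finset β) [DecidablePred fun ω : α → β => ∀ i, ω i ∈ A i] :
    (Finset.univ.filter (fun ω : α → β => ∀ i, ω i ∈ A i)).card = ∏ i, (A i).card := by
  classical
  rw [← Fintype.card_subtype]
  rw [Fintype.card_congr (Equiv.subtypePiEquivPi (p := fun i b => b ∈ A i))]
  simp [Fintype.card_pi]

lemma hall_witness {n t : ℕ} (ω : Fin n → Fin t → Fin n)
    (h : ¬ ∃ σ : Equiv.Perm (Fin n), ∀ i : Fin n, ∃ j : Fin t, ω i j = σ i) :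
    ∃ S T : Finset (Fin n), S.card = T.card + 1 ∧ ∀ i ∈ S, ∀ k, ω i k ∈ T := by
  classical
  set N : Fin n → Finset (Fin n) := fun i => Finset.image (ω i) Finset.univ with hN
  have hhall : ¬ ∀ s : Finset (Fin n), s.card ≤ (s.biUnion N).card := by
    intro hc
    obtain ⟨f, hf, hmem⟩ := (Finset.all_card_le_biUnion_card_iff_exists_injective N).mp hc
    have hbij : Function.Bijective f := (Finite.injective_iff_bijective).mp hf
    refine h ⟨Equiv.ofBijective f hbij, fun i => ?_⟩
    have := hmem i
    simp only [hN, Finset.mem_image, Finset.mem_univ, true_and] at this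
    exact this
  push_neg at hhall
  obtain ⟨S, hS⟩ := hhall
  set T := S.biUnion N with hT
  obtain ⟨S', hS'sub, hS'card⟩ := S.exists_subset_card_eq (by omega : T.card + 1 ≤ S.card)
  refine ⟨S', T, hS'card, fun i hi k => ?_⟩
  exact Finset.mem_biUnion.mpr ⟨i, hS'sub hi, Finset.mem_image.mpr ⟨k, Finset.mem_univ k, rfl⟩⟩

lemma card_E {n t : ℕ} (S T : Finset (Fin n)) :
    (Finset.univ.filter (fun ω : Fin n → Fin t → Fin n =>
        ∀ i ∈ S, ∀ k, ω i k ∈ T)).card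
      = T.card ^ (S.card * t) * n ^ ((n - S.card) * t) := by
  classical
  have hpred : Finset.univ.filter (fun ω : Fin n → Fin t → Fin n => ∀ i ∈ S, ∀ k, ω i k ∈ T)
      = Finset.univ.filter (fun ω : Fin n → Fin t → Fin n => ∀ i, ω i ∈ (if i ∈ S then
          (Finset.univ.filter (fun g : Fin t → Fin n => ∀ k, g k ∈ T)) else Finset.univ)) := by
    apply Finset.filter_congr
    intro ω _
    constructor
    · intro hω i
      by_cases hi : i ∈ S <;> simp [hi, hω i]
    · intro hω i hi
      have := hω i
      simp [hi] at this
      exact this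
  rw [hpred]
  rw [card_filter_pi (A := fun i : Fin n => if i ∈ S then
          (Finset.univ.filter (fun g : Fin t → Fin n => ∀ k, g k ∈ T)) else Finset.univ)]
  have hG : (Finset.univ.filter (fun g : Fin t → Fin n => ∀ k, g k ∈ T)).card
      = T.card ^ t := by
    rw [card_filter_pi (fun _ : Fin t => T)]
    simp
  have : ∀ i : Fin n, ((if i ∈ S then
      (Finset.univ.filter (fun g : Fin t → Fin n => ∀ k, g k ∈ T)) else Finset.univ)).card
      = if i ∈ S then T.card ^ t else n ^ t := by
    intro i; split <;> simp [hG, Fintype.card_fun]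
  simp only [this]
  rw [← Finset.prod_mul_prod_compl S]
  have h1 : (∏ i ∈ S, if i ∈ S then T.card ^ t else n ^ t) = (T.card ^ t) ^ S.card := by
    rw [Finset.prod_congr rfl (fun i hi => if_pos hi), Finset.prod_const]
  have h2 : (∏ i ∈ Sᶜ, if i ∈ S then T.card ^ t else n ^ t) = (n ^ t) ^ (n - S.card) := by
    rw [Finset.prod_congr rfl (fun i hi => if_neg (Finset.mem_compl.mp hi)),
      Finset.prod_const, Finset.card_compl, Fintype.card_fin]
  rw [h1, h2, ← pow_mul, ← pow_mul, mul_comm t S.card, mul_comm t (n - S.card)]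

def PP (n : ℕ) : Finset (Finset (Fin n) × Finset (Fin n)) :=
  Finset.univ.filter (fun p => p.1.card = p.2.card + 1)

def EE (n t : ℕ) (p : Finset (Fin n) × Finset (Fin n)) : Finset (Fin n → Fin t → Fin n) :=
  Finset.univ.filter (fun ω => ∀ i ∈ p.1, ∀ k, ω i k ∈ p.2)

/-- **Union bound for the no-perfect-matching event.**
In the random bipartite graph where each left vertex `i ∈ {1,…,n}` samples
`t` independent uniform right neighbours, the probability that no perfect
matching exists is at most
`∑_{i=1}^{n} (n choose i)(n choose (i−1))((i−1)/n)^{i·t}`.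
Probability is measured by counting sample points `ω : Fin n → Fin t → Fin n`. -/
theorem no_perfect_matching_prob_le_union_bound (n t : ℕ) (hn : 0 < n) :
    ((Finset.univ.filter (fun ω : Fin n → Fin t → Fin n =>
          ¬ ∃ σ : Equiv.Perm (Fin n), ∀ i : Fin n, ∃ j : Fin t, ω i j = σ i)).card : ℝ)
      ≤ (∑ i ∈ Finset.Icc 1 n,
            (n.choose i : ℝ) * (n.choose (i - 1) : ℝ)
              * (((i : ℝ) - 1) / (n : ℝ)) ^ (i * t))
          * (Fintype.card (Fin n → Fin t → Fin n) : ℝ) := by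
  classical
  have hsub : (Finset.univ.filter (fun ω : Fin n → Fin t → Fin n =>
      ¬ ∃ σ : Equiv.Perm (Fin n), ∀ i : Fin n, ∃ j : Fin t, ω i j = σ i)) ⊆ (PP n).biUnion (EE n t) := by
    intro ω hω
    simp only [Finset.mem_filter, Finset.mem_univ, true_and] at hω
    obtain ⟨S, T, hcard, hmem⟩ := hall_witness ω hω
    refine Finset.mem_biUnion.mpr ⟨(S, T), by simp [PP, hcard], ?_⟩
    simp only [EE, Finset.mem_filter, Finset.mem_univ, true_and]
    exact hmem
  have hcard1 := le_trans (Finset.card_le_card hsub) (Finset.card_biUnion_le)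
  have hstep1 : ((Finset.univ.filter (fun ω : Fin n → Fin t → Fin n =>
      ¬ ∃ σ : Equiv.Perm (Fin n), ∀ i : Fin n, ∃ j : Fin t, ω i j = σ i)).card : ℝ)
      ≤ ∑ p ∈ PP n, ((EE n t p).card : ℝ) := by
    exact_mod_cast hcard1
  clear hcard1
  have hnR : (0:ℝ) < n := by exact_mod_cast hn
  have key : ∀ p ∈ PP n, ((EE n t p).card : ℝ)
      = ((p.2.card : ℝ) / n) ^ (p.1.card * t) * (n:ℝ) ^ (n * t) := by
    intro p hp
    have hSle : p.1.card ≤ n := by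
      simpa using (Finset.card_le_univ p.1)
    have hEc : (EE n t p).card = p.2.card ^ (p.1.card * t) * n ^ ((n - p.1.card) * t) := card_E _ _
    have hsplit : p.1.card * t + (n - p.1.card) * t = n * t := by
      rw [← Nat.add_mul, Nat.add_sub_cancel' hSle]
    have hpow : (n:ℝ) ^ (n * t) = (n:ℝ) ^ (p.1.card * t) * (n:ℝ) ^ ((n - p.1.card) * t) := by
      rw [← pow_add, hsplit]
    rw [hEc, hpow]
    push_cast
    rw [div_pow]
    field_simp
  rw [Finset.sum_congr rfl key] at hstep1
  have hmaps : ∀ p ∈ PP n, p.1.card ∈ Finset.Icc 1 n := by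
    intro p hp
    simp only [PP, Finset.mem_filter] at hp
    have h1 : p.1.card ≤ n := by simpa using (Finset.card_le_univ p.1)
    have h2 := hp.2
    refine Finset.mem_Icc.mpr ⟨?_, h1⟩
    omega
  rw [← Finset.sum_fiberwise_of_maps_to hmaps
    (fun p => ((p.2.card : ℝ) / n) ^ (p.1.card * t) * (n:ℝ) ^ (n * t))] at hstep1
  have hcardΩ : (Fintype.card (Fin n → Fin t → Fin n) : ℝ) = (n:ℝ) ^ (n * t) := by
    simp only [Fintype.card_fun, Fintype.card_fin]
    push_cast
    rw [← pow_mul, mul_comm]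
  rw [hcardΩ, Finset.sum_mul]
  refine le_trans hstep1 (Finset.sum_le_sum ?_)
  intro i hi
  have hi1 : 1 ≤ i := (Finset.mem_Icc.mp hi).1
  have hval : ∀ p ∈ (PP n).filter (fun p => p.1.card = i),
      ((p.2.card : ℝ) / n) ^ (p.1.card * t) * (n:ℝ) ^ (n * t)
        = (((i:ℝ) - 1) / n) ^ (i * t) * (n:ℝ) ^ (n * t) := by
    intro p hp
    simp only [PP, Finset.mem_filter, Finset.mem_univ, true_and] at hp
    have h1 := hp.1
    have h2 := hp.2
    have hT : p.2.card = i - 1 := by omega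
    have : ((p.2.card : ℝ)) = (i:ℝ) - 1 := by
      rw [hT]
      push_cast [hi1]
      ring
    rw [hp.2, this]
  rw [Finset.sum_congr rfl hval, Finset.sum_const, nsmul_eq_mul]
  have hsubset : (PP n).filter (fun p => p.1.card = i)
      ⊆ (Finset.powersetCard i Finset.univ) ×ˢ (Finset.powersetCard (i-1) Finset.univ) := by
    intro p hp
    simp only [PP, Finset.mem_filter, Finset.mem_univ, true_and] at hp
    refine Finset.mem_product.mpr ⟨?_, ?_⟩
    · exact Finset.mem_powersetCard.mpr ⟨Finset.subset_univ _, hp.2⟩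
    · have h1 := hp.1
      have h2 := hp.2
      refine Finset.mem_powersetCard.mpr ⟨Finset.subset_univ _, ?_⟩
      omega
  have hcount : ((PP n).filter (fun p => p.1.card = i)).card ≤ n.choose i * n.choose (i-1) := by
    refine le_trans (Finset.card_le_card hsubset) ?_
    rw [Finset.card_product, Finset.card_powersetCard, Finset.card_powersetCard]
    simp
  have hnonneg : (0:ℝ) ≤ (((i:ℝ) - 1) / n) ^ (i * t) * (n:ℝ) ^ (n * t) := by
    apply mul_nonneg
    · apply pow_nonneg
      apply div_nonneg _ (le_of_lt hnR)
      have : (1:ℝ) ≤ i := by exact_mod_cast hi1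
      linarith
    · positivity
  calc (((PP n).filter (fun p => p.1.card = i)).card : ℝ)
        * ((((i:ℝ) - 1) / n) ^ (i * t) * (n:ℝ) ^ (n * t))
      ≤ ((n.choose i * n.choose (i-1) : ℕ) : ℝ)
        * ((((i:ℝ) - 1) / n) ^ (i * t) * (n:ℝ) ^ (n * t)) := by
        apply mul_le_mul_of_nonneg_right _ hnonneg
        exact_mod_cast hcount
    _ = (n.choose i : ℝ) * (n.choose (i - 1) : ℝ) * (((i : ℝ) - 1) / (n : ℝ)) ^ (i * t)
        * (n:ℝ) ^ (n * t) := by push_cast; ring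
end

section
/- There exists an absolute constant C > 0 such that the following holds. Let L, V, n be positive integers with 1 ≤ n < L·V, and let p be a probability mass function on {0, 1, …, V} whose mean satisfies L·∑_{s=0}^{V} s·p(s) = n. Then L·∑_{s=0}^{V} p(s)·(log₂(1/p(s)) + log₂ (V choose s)) ≤ log₂ ((L·V) choose n) + C·log₂(L·V), with the convention that a term with p(s) = 0 contributes 0. -/
open Finset

lemma gibbs_aux (s : Finset ℕ) (p a : ℕ → ℝ) (hp : ∀ i ∈ s, 0 ≤ p i)
    (hp1 : ∑ i ∈ s, p i = 1) (ha : ∀ i ∈ s, 0 < a i) :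
    ∑ i ∈ s, p i * (Real.log (a i) - Real.log (p i)) ≤ Real.log (∑ i ∈ s, a i) := by
  have hne : s.Nonempty := by
    rcases s.eq_empty_or_nonempty with h | h
    · exfalso; rw [h] at hp1; simp at hp1
    · exact h
  set A := ∑ i ∈ s, a i with hA
  have hA0 : 0 < A := Finset.sum_pos ha hne
  have key : ∀ i ∈ s, p i * (Real.log (a i) - Real.log (p i)) ≤ a i / A - p i + p i * Real.log A := by
    intro i hi
    rcases eq_or_lt_of_le (hp i hi) with h0 | h0
    · rw [← h0]
      simp only [zero_mul, mul_zero, sub_zero, add_zero, zero_sub, neg_zero]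
      have := div_nonneg (ha i hi).le hA0.le
      linarith
    · have hai := ha i hi
      have hlog : Real.log (a i / (A * p i)) ≤ a i / (A * p i) - 1 :=
        Real.log_le_sub_one_of_pos (by positivity)
      have hexp : Real.log (a i / (A * p i)) = Real.log (a i) - Real.log A - Real.log (p i) := by
        rw [Real.log_div (by positivity) (by positivity), Real.log_mul (by positivity) (by positivity)]
        ring
      rw [hexp] at hlog
      have := mul_le_mul_of_nonneg_left hlog (le_of_lt h0)
      have heq : p i * (a i / (A * p i) - 1) = a i / A - p i := by
        field_simp
      rw [heq] at this
      nlinarith [this]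
  calc ∑ i ∈ s, p i * (Real.log (a i) - Real.log (p i))
      ≤ ∑ i ∈ s, (a i / A - p i + p i * Real.log A) := Finset.sum_le_sum key
    _ = (∑ i ∈ s, a i) / A - (∑ i ∈ s, p i) + (∑ i ∈ s, p i) * Real.log A := by
        rw [Finset.sum_add_distrib, Finset.sum_sub_distrib, ← Finset.sum_div, ← Finset.sum_mul]
    _ = Real.log A := by rw [hp1, ← hA]; field_simp; ring
open Finset

lemma maxterm (U n : ℕ) (_hn1 : 1 ≤ n) (hnU : n < U) :
    U ^ U ≤ (U + 1) * (U.choose n * n ^ n * (U - n) ^ (U - n)) := by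
  set m := U - n with hm
  set f : ℕ → ℕ := fun k => U.choose k * n ^ k * m ^ (U - k) with hf
  have h1 : ∀ k, k < n → f k ≤ f (k + 1) := by
    intro k hk
    have hkU : k < U := lt_trans hk hnU
    apply Nat.le_of_mul_le_mul_right _ (Nat.succ_pos k)
    have e1 : f (k + 1) * (k + 1) = U.choose k * n ^ k * m ^ (U - k - 1) * ((U - k) * n) := by
      simp only [hf]
      rw [mul_comm (U.choose (k+1) * n ^ (k+1) * m ^ (U - (k+1))) (k+1)]
      rw [show U - (k+1) = U - k - 1 by omega]
      rw [← mul_assoc, ← mul_assoc]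
      rw [show (k+1) * U.choose (k+1) = U.choose (k+1) * (k+1) by ring, Nat.choose_succ_right_eq]
      ring
    have e2 : f k * (k + 1) = U.choose k * n ^ k * m ^ (U - k - 1) * (m * (k + 1)) := by
      simp only [hf]
      rw [show m ^ (U - k) = m ^ (U - k - 1) * m by
        rw [← pow_succ, show U - k - 1 + 1 = U - k by omega]]
      ring
    rw [e1, e2]
    exact Nat.mul_le_mul_left _ (Nat.mul_le_mul (by omega) hk)
  have h2 : ∀ k, n ≤ k → f (k + 1) ≤ f k := by
    intro k hk
    rcases le_or_gt U k with hUk | hkU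
    · have : U.choose (k + 1) = 0 := Nat.choose_eq_zero_of_lt (by omega)
      simp [hf, this]
    · apply Nat.le_of_mul_le_mul_right _ (Nat.succ_pos k)
      have e1 : f (k + 1) * (k + 1) = U.choose k * n ^ k * m ^ (U - k - 1) * ((U - k) * n) := by
        simp only [hf]
        rw [mul_comm (U.choose (k+1) * n ^ (k+1) * m ^ (U - (k+1))) (k+1)]
        rw [show U - (k+1) = U - k - 1 by omega]
        rw [← mul_assoc, ← mul_assoc]
        rw [show (k+1) * U.choose (k+1) = U.choose (k+1) * (k+1) by ring, Nat.choose_succ_right_eq]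
        ring
      have e2 : f k * (k + 1) = U.choose k * n ^ k * m ^ (U - k - 1) * (m * (k + 1)) := by
        simp only [hf]
        rw [show m ^ (U - k) = m ^ (U - k - 1) * m by
          rw [← pow_succ, show U - k - 1 + 1 = U - k by omega]]
        ring
      rw [e1, e2]
      exact Nat.mul_le_mul_left _ (Nat.mul_le_mul (by omega) (by omega))
  have hdown : ∀ j, f (n + j) ≤ f n := by
    intro j
    induction j with
    | zero => simp
    | succ j ih => exact le_trans (by rw [show n + (j+1) = (n+j) + 1 by omega]; exact h2 _ (by omega)) ih
  have hup : ∀ j, j ≤ n → f (n - j) ≤ f n := by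
    intro j
    induction j with
    | zero => simp
    | succ j ih =>
      intro hj
      have : f (n - (j + 1)) ≤ f (n - j) := by
        have := h1 (n - (j+1)) (by omega)
        rwa [show n - (j+1) + 1 = n - j by omega] at this
      exact le_trans this (ih (by omega))
  have hkey : ∀ k, f k ≤ f n := by
    intro k
    rcases le_or_gt k n with h | h
    · have := hup (n - k) (by omega); rwa [show n - (n - k) = k by omega] at this
    · have := hdown (k - n); rwa [show n + (k - n) = k by omega] at this
  have hbin : U ^ U = ∑ k ∈ range (U + 1), f k := by
    have hnm : n + m = U := by omega
    calc U ^ U = (n + m) ^ U := by rw [hnm]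
      _ = ∑ k ∈ range (U + 1), n ^ k * m ^ (U - k) * U.choose k := add_pow n m U
      _ = ∑ k ∈ range (U + 1), f k := by
          apply Finset.sum_congr rfl; intro k _; simp only [hf]; ring
  rw [hbin]
  calc ∑ k ∈ range (U + 1), f k ≤ ∑ k ∈ range (U + 1), f n :=
        Finset.sum_le_sum (fun k _ => hkey k)
    _ = (U + 1) * f n := by rw [Finset.sum_const, card_range]; ring



set_option maxHeartbeats 1000000 in
/-- **Per-bucket encoding lengths sum to at most `log₂ (U choose n) + O(log U)`.**
There is an absolute constant `C > 0` such that: for positive integers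
`L, V, n` with `n < L·V` and a probability mass function `p` on `{0,…,V}`
with `L·E_{s∼p}[s] = n`, we have
`L·∑_s p(s)·(log₂(1/p(s)) + log₂ (V choose s)) ≤ log₂ ((L·V) choose n) + C·log₂(L·V)`. -/
theorem bucket_entropy_le_log_choose :
    ∃ C : ℝ, C > 0 ∧
      ∀ L V n : ℕ, 0 < L → 0 < V → 1 ≤ n → n < L * V →
        ∀ p : ℕ → ℝ,
          (∀ s ∈ Finset.range (V + 1), 0 ≤ p s) →
          (∑ s ∈ Finset.range (V + 1), p s = 1) →
          ((L : ℝ) * ∑ s ∈ Finset.range (V + 1), (s : ℝ) * p s = (n : ℝ)) →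
          (L : ℝ) * ∑ s ∈ Finset.range (V + 1),
              p s * (Real.logb 2 (1 / p s) + Real.logb 2 (V.choose s))
            ≤ Real.logb 2 ((L * V).choose n) + C * Real.logb 2 (L * V) := by
  refine ⟨2, by norm_num, ?_⟩
  intro L V n hL hV hn hnU p hp0 hp1 hmean
  set U : ℕ := L * V with hU
  have hU2 : 2 ≤ U := by omega
  set M : ℕ := U - n with hM
  have hM1 : 1 ≤ M := by omega
  have hrM : (M : ℝ) = (U : ℝ) - (n : ℝ) := by
    push_cast [hM, Nat.cast_sub hnU.le]; ring
  have hrn : (0:ℝ) < n := by exact_mod_cast hn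
  have hrMpos : (0:ℝ) < M := by exact_mod_cast hM1
  have hrU : (0:ℝ) < U := by positivity
  set t : ℝ := (n : ℝ) / (M : ℝ) with ht
  have ht0 : 0 < t := by positivity
  set a : ℕ → ℝ := fun i => (V.choose i : ℝ) * t ^ i with ha
  have hapos : ∀ i ∈ Finset.range (V + 1), 0 < a i := by
    intro i hi
    have : 0 < V.choose i := Nat.choose_pos (by simpa [Nat.lt_succ_iff] using Finset.mem_range.mp hi)
    have : (0:ℝ) < V.choose i := by exact_mod_cast this
    positivity
  have hG := gibbs_aux (Finset.range (V + 1)) p a hp0 hp1 hapos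
  have hsum : ∑ i ∈ Finset.range (V + 1), a i = (t + 1) ^ V := by
    rw [add_pow t 1 V]
    apply Finset.sum_congr rfl
    intro i _
    simp [ha]; ring
  set S : ℝ := ∑ i ∈ Finset.range (V + 1), p i * (Real.log (V.choose i) - Real.log (p i)) with hS
  have hexpand : ∑ i ∈ Finset.range (V + 1), p i * (Real.log (a i) - Real.log (p i))
      = S + (∑ i ∈ Finset.range (V + 1), (i : ℝ) * p i) * Real.log t := by
    rw [hS, Finset.sum_mul, ← Finset.sum_add_distrib]
    apply Finset.sum_congr rfl
    intro i hi
    have hc : (0:ℝ) < V.choose i := by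
      exact_mod_cast Nat.choose_pos (by simpa [Nat.lt_succ_iff] using Finset.mem_range.mp hi)
    have : Real.log (a i) = Real.log (V.choose i) + (i : ℝ) * Real.log t := by
      rw [ha]
      simp only
      rw [Real.log_mul (ne_of_gt hc) (by positivity), Real.log_pow]
    rw [this]; ring
  rw [hexpand, hsum, Real.log_pow] at hG
  -- multiply by L
  have hrL : (0:ℝ) < L := by exact_mod_cast hL
  have hmean' : ∑ i ∈ Finset.range (V + 1), (i : ℝ) * p i = (n : ℝ) / L := by
    rw [eq_div_iff (ne_of_gt hrL)]
    linear_combination hmean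
  rw [hmean'] at hG
  have hLS : (L : ℝ) * S ≤ (U : ℝ) * Real.log (t + 1) - (n : ℝ) * Real.log t := by
    have := mul_le_mul_of_nonneg_left (by linarith [hG] : S ≤ (V : ℝ) * Real.log (t + 1) - (n : ℝ) / L * Real.log t) hrL.le
    calc (L : ℝ) * S ≤ (L : ℝ) * ((V : ℝ) * Real.log (t + 1) - (n : ℝ) / L * Real.log t) := this
      _ = (U : ℝ) * Real.log (t + 1) - (n : ℝ) * Real.log t := by
          rw [hU]; push_cast; field_simp
  -- rewrite logs of t
  have ht1 : t + 1 = (U : ℝ) / (M : ℝ) := by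
    rw [ht]
    field_simp
    linarith [hrM]
  have hlogt1 : Real.log (t + 1) = Real.log U - Real.log M := by
    rw [ht1, Real.log_div (ne_of_gt hrU) (ne_of_gt hrMpos)]
  have hlogt : Real.log t = Real.log n - Real.log M := by
    rw [ht, Real.log_div (ne_of_gt hrn) (ne_of_gt hrMpos)]
  have hUnM : (U : ℝ) = (n : ℝ) + (M : ℝ) := by rw [hrM]; ring
  have hLS2 : (L : ℝ) * S ≤ (U : ℝ) * Real.log U - (n : ℝ) * Real.log n - (M : ℝ) * Real.log M := by
    rw [hlogt1, hlogt] at hLS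
    have e : (U:ℝ) * (Real.log U - Real.log M) - (n:ℝ) * (Real.log n - Real.log M)
        = (U:ℝ) * Real.log U - (n:ℝ) * Real.log n - (M:ℝ) * Real.log M := by
      linear_combination (-Real.log (M:ℝ)) * hUnM
    rw [e] at hLS
    exact hLS
  -- maxterm bound
  have hmt := maxterm U n hn hnU
  have hchoosepos : 0 < U.choose n := Nat.choose_pos hnU.le
  have hlogmax : (U : ℝ) * Real.log U ≤ Real.log (U + 1) + Real.log (U.choose n)
      + (n : ℝ) * Real.log n + (M : ℝ) * Real.log M := by
    have hcast : ((U : ℝ)) ^ U ≤ ((U : ℝ) + 1) * ((U.choose n : ℝ) * (n : ℝ) ^ n * (M : ℝ) ^ M) := by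
      exact_mod_cast hmt
    have hlog := Real.log_le_log (by positivity) hcast
    rw [Real.log_pow] at hlog
    rw [Real.log_mul (by positivity) (by positivity), Real.log_mul (by positivity) (by positivity),
      Real.log_mul (by positivity) (by positivity), Real.log_pow, Real.log_pow] at hlog
    linarith only [hlog]
  have hlogU1 : Real.log ((U : ℝ) + 1) ≤ 2 * Real.log U := by
    have h2U : (2:ℝ) ≤ (U:ℝ) := by exact_mod_cast hU2
    have h1 : ((U : ℝ) + 1) ≤ (U : ℝ) ^ 2 := by nlinarith [h2U, sq_nonneg ((U:ℝ) - 1)]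
    calc Real.log ((U : ℝ) + 1) ≤ Real.log ((U : ℝ) ^ 2) := Real.log_le_log (by positivity) h1
      _ = 2 * Real.log U := by rw [Real.log_pow]; norm_num
  have hfinal : (L : ℝ) * S ≤ Real.log (U.choose n) + 2 * Real.log U := by
    push_cast at hlogmax
    linarith only [hlogmax, hlogU1, hLS2]
  -- convert to logb
  have hlog2 : (0:ℝ) < Real.log 2 := Real.log_pos (by norm_num)
  have hLHS : (L : ℝ) * ∑ s ∈ Finset.range (V + 1),
      p s * (Real.logb 2 (1 / p s) + Real.logb 2 (V.choose s)) = (L : ℝ) * S / Real.log 2 := by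
    rw [hS, mul_div_assoc, Finset.sum_div]
    congr 1
    apply Finset.sum_congr rfl
    intro i _
    simp only [Real.logb, one_div, Real.log_inv]
    ring
  rw [hLHS]
  have hrw : Real.logb 2 ((L * V).choose n) + 2 * Real.logb 2 (L * V)
      = (Real.log (U.choose n) + 2 * Real.log U) / Real.log 2 := by
    simp only [Real.logb]
    push_cast [hU]
    ring
  rw [hrw]
  gcongr
end

section
/- For all sufficiently large natural numbers n the following holds. Let t = ⌈10·log₂ n⌉, let p be a real number with 1/n³ ≤ p ≤ 1, and let m be a positive integer with 2^t·(p − n^{−6}) ≤ m ≤ 2^t. Then log₂ ⌈2^{2t}/m⌉ ≤ log₂(1/p) + t + 1/n². -/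
set_option maxHeartbeats 1000000 in
/-- **Redundancy bound for re-encoding the bucket size.**
For all sufficiently large `n`, with `t = ⌈10·log₂ n⌉`: if `1/n³ ≤ p ≤ 1`
and `m` is a positive integer with `2^t·(p − n^{−6}) ≤ m ≤ 2^t`, then
`log₂ ⌈2^{2t}/m⌉ ≤ log₂(1/p) + t + 1/n²`. -/
theorem logb_ceil_ratio_le :
    ∀ᶠ n : ℕ in Filter.atTop, ∀ t : ℕ, t = ⌈10 * Real.logb 2 n⌉₊ →
      ∀ p : ℝ, 1 / (n : ℝ) ^ 3 ≤ p → p ≤ 1 →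
        ∀ m : ℕ, 0 < m →
          (2 : ℝ) ^ t * (p - 1 / (n : ℝ) ^ 6) ≤ (m : ℝ) → (m : ℝ) ≤ (2 : ℝ) ^ t →
            Real.logb 2 (⌈((2 : ℝ) ^ (2 * t)) / (m : ℝ)⌉₊ : ℝ)
              ≤ Real.logb 2 (1 / p) + (t : ℝ) + 1 / (n : ℝ) ^ 2 := by
  filter_upwards [Filter.eventually_ge_atTop 10] with n hn
  intro t ht p hp1 hp2 m hm hml hmu
  have hn1 : (10:ℝ) ≤ (n:ℝ) := by exact_mod_cast hn
  have hn0 : (0:ℝ) < n := by linarith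
  have hp0 : (0:ℝ) < p := lt_of_lt_of_le (by positivity) hp1
  set c : ℝ := 1 / (n:ℝ)^3 with hc_def
  have hc0 : 0 < c := by positivity
  have hcn : c * (n:ℝ)^3 = 1 := by rw [hc_def]; field_simp
  have hc_small : c ≤ 1/1000 := by
    rw [hc_def, div_le_div_iff₀ (by positivity) (by norm_num)]
    nlinarith [pow_le_pow_left₀ (by norm_num : (0:ℝ) ≤ 10) hn1 3]
  set A : ℝ := (2:ℝ)^t with hA_def
  have hA0 : (0:ℝ) < A := by positivity
  -- A ≥ n^3
  have hA : (n:ℝ)^3 ≤ A := by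
    have h2 : Real.logb 2 ((n:ℝ)^3) ≤ (t:ℝ) := by
      rw [Real.logb_pow]
      have hl0 : 0 ≤ Real.logb 2 (n:ℝ) := Real.logb_nonneg one_lt_two (by linarith)
      have ht' : 10 * Real.logb 2 (n:ℝ) ≤ (t:ℝ) := by
        rw [ht]; exact Nat.le_ceil _
      push_cast
      linarith
    calc (n:ℝ)^3 = (2:ℝ) ^ (Real.logb 2 ((n:ℝ)^3)) :=
          (Real.rpow_logb two_pos (by norm_num) (by positivity)).symm
      _ ≤ (2:ℝ) ^ ((t:ℝ)) := Real.rpow_le_rpow_of_exponent_le one_le_two h2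
      _ = A := by rw [hA_def, Real.rpow_natCast]
  -- lower bound on m
  have hm_lb : A * (p * (1 - c)) ≤ (m:ℝ) := by
    have key : p - 1/(n:ℝ)^6 ≥ p * (1 - c) := by
      have h6 : (1:ℝ)/(n:ℝ)^6 = c * c := by rw [hc_def]; ring
      nlinarith [mul_le_mul_of_nonneg_right hp1 (le_of_lt hc0)]
    nlinarith
  have hpc0 : 0 < p * (1 - c) := by nlinarith
  have hm0 : (0:ℝ) < (m:ℝ) := lt_of_lt_of_le (by nlinarith) hm_lb
  set X : ℝ := (2:ℝ)^(2*t) / (m:ℝ) with hX_def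
  have hX0 : 0 < X := by positivity
  have hXle : X ≤ A / (p * (1 - c)) := by
    rw [hX_def, div_le_div_iff₀ hm0 hpc0]
    have h2t : (2:ℝ)^(2*t) = A * A := by rw [hA_def, two_mul, pow_add]
    rw [h2t]
    nlinarith [mul_le_mul_of_nonneg_left hm_lb hA0.le]
  have hceil : (⌈X⌉₊:ℝ) ≤ X + 1 := le_of_lt (Nat.ceil_lt_add_one (le_of_lt hX0))
  clear_value X A c
  have hbound : (⌈X⌉₊:ℝ) ≤ (A / p) * (1 + 3*c) := by
    have hAc : 1 ≤ A * c := by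
      calc (1:ℝ) = c * (n:ℝ)^3 := hcn.symm
        _ ≤ c * A := by nlinarith
        _ = A * c := by ring
    have key2 : p * (1 - c) ≤ A * ((1 + 3*c) * (1 - c) - 1) := by
      nlinarith [mul_le_mul_of_nonneg_right hAc (show (0:ℝ) ≤ 2 - 3*c by linarith),
        mul_nonneg hp0.le hc0.le]
    have key : A / (p * (1 - c)) + 1 ≤ (A / p) * (1 + 3*c) := by
      rw [← sub_nonneg]
      have heq : (A / p) * (1 + 3*c) - (A / (p * (1 - c)) + 1)
          = (A * ((1 + 3*c) * (1 - c) - 1) - p * (1 - c)) / (p * (1 - c)) := by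
        have h1 : p ≠ 0 := hp0.ne'
        have h2 : (1 - c) ≠ 0 := by nlinarith
        field_simp
        ring
      rw [heq]
      exact div_nonneg (by linarith) hpc0.le
    linarith
  have hceil1 : (1:ℝ) ≤ (⌈X⌉₊:ℝ) := by
    exact_mod_cast Nat.one_le_ceil_iff.mpr hX0
  have hlog : Real.logb 2 (⌈X⌉₊:ℝ) ≤ Real.logb 2 ((A / p) * (1 + 3*c)) :=
    Real.logb_le_logb_of_le one_lt_two (by linarith) hbound
  have hsplit : Real.logb 2 ((A / p) * (1 + 3*c))
      = (t:ℝ) + Real.logb 2 (1/p) + Real.logb 2 (1 + 3*c) := by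
    rw [Real.logb_mul (by positivity) (by positivity),
        div_eq_mul_one_div A p,
        Real.logb_mul (by positivity) (by positivity)]
    have : Real.logb 2 A = (t:ℝ) := by
      rw [hA_def, Real.logb_pow, Real.logb_self_eq_one one_lt_two]
      ring
    rw [this]
  have hlast : Real.logb 2 (1 + 3*c) ≤ 1 / (n:ℝ)^2 := by
    have hlog_le : Real.log (1 + 3*c) ≤ 3*c := by
      have := Real.log_le_sub_one_of_pos (show (0:ℝ) < 1 + 3*c by linarith)
      linarith
    have hl2 : (0.6931471803:ℝ) < Real.log 2 := Real.log_two_gt_d9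
    rw [Real.logb, div_le_iff₀ (by linarith)]
    have h3c : 3*c ≤ (1/(n:ℝ)^2) * 0.6931471803 := by
      have hkey : (1/(n:ℝ)^2) * 0.6931471803 - 3*c
          = (0.6931471803 * (n:ℝ) - 3) / (n:ℝ)^3 := by
        rw [hc_def]; field_simp
      nlinarith [div_nonneg (show (0:ℝ) ≤ 0.6931471803 * (n:ℝ) - 3 by nlinarith)
        (show (0:ℝ) ≤ (n:ℝ)^3 by positivity)]
    calc Real.log (1 + 3*c) ≤ 3*c := hlog_le
      _ ≤ (1/(n:ℝ)^2) * 0.6931471803 := h3c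
      _ ≤ (1/(n:ℝ)^2) * Real.log 2 := by
          apply mul_le_mul_of_nonneg_left (le_of_lt hl2) (by positivity)
  calc Real.logb 2 (⌈X⌉₊:ℝ) ≤ (t:ℝ) + Real.logb 2 (1/p) + Real.logb 2 (1 + 3*c) := by
        rw [← hsplit]; exact hlog
    _ ≤ Real.logb 2 (1/p) + (t:ℝ) + 1/(n:ℝ)^2 := by linarith
end
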